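/- arXiv:1410.7184 — 4 statements merged into one kernel-verified Lean document; each statement's English description precedes it below -/
import Mathlib

section
/- Let q be an odd prime power, m a positive integer, U a k-dimensional F_q-subspace of V = F_{q^m}, ℓ an integer, and s a positive integer coprime to m. Then every F_q-bilinear form B: U × V → F_q can be written uniquely as B(x,y) = Tr(Σ_{j=0}^{k-1} a_j · y · x^{q^{s(j-ℓ)}}) for some a_0, a_1, …, a_{k-1} ∈ F_{q^m}, where Tr: F_{q^m} → F_q is the field trace. -/
open Module LinearMap

section AuxLemmas

variable {F K : Type*} [Field F] [Field K] [Algebra F K]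

private def gseqAux (τ : K ≃ₐ[F] K) (c : K) (n : ℕ) (a : ℕ → K) : ℕ → K
  | 0 => 0
  | t+1 => a (n - t) + gseqAux τ c n a t * (τ^(n-t) : K ≃ₐ[F] K) c

private lemma finrank_comap_le_aux [FiniteDimensional F K] (D : K →ₗ[F] K)
    (S : Submodule F K) :
    finrank F (S.comap D) ≤ finrank F S + finrank F (ker D) := by
  have h : ∀ x ∈ S.comap D, D x ∈ S := fun x hx => hx
  have h1 := LinearMap.finrank_range_add_finrank_ker (D.restrict h)
  have h2 : finrank F (range (D.restrict h)) ≤ finrank F S := Submodule.finrank_le _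
  have h3 : finrank F (ker (D.restrict h)) ≤ finrank F (ker D) := by
    refine LinearMap.finrank_le_finrank_of_injective
      (f := LinearMap.codRestrict (ker D)
        (((S.comap D).subtype).comp (ker (D.restrict h)).subtype) ?_) ?_
    · rintro ⟨⟨x, hxS⟩, hx⟩
      simpa [LinearMap.mem_ker, LinearMap.restrict_apply, Subtype.ext_iff] using hx
    · intro x y hxy
      apply Subtype.ext; apply Subtype.ext
      have := congrArg Subtype.val hxy
      simpa only [LinearMap.codRestrict_apply, LinearMap.coe_comp, Function.comp_apply,
        Submodule.coe_subtype] using this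
  omega

private lemma ker_bound_aux [FiniteDimensional F K] (τ : K ≃ₐ[F] K)
    (hfix : ∀ x : K, τ x = x → ∃ r : F, algebraMap F K r = x) :
    ∀ (d : ℕ) (a : Fin (d+1) → K), a ≠ 0 →
      finrank F (ker (∑ j : Fin (d+1), a j • ((τ^(j:ℕ)).toLinearMap))) ≤ d := by
  intro d
  induction d with
  | zero =>
    intro a ha
    have ha0 : a 0 ≠ 0 := fun h => ha (funext fun i => by fin_cases i; exact h)
    have hker : ker (∑ j : Fin 1, a j • ((τ^(j:ℕ)).toLinearMap)) = ⊥ := by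
      rw [Fin.sum_univ_one]
      ext x
      simp only [LinearMap.mem_ker, LinearMap.smul_apply, Fin.val_zero, pow_zero,
        AlgEquiv.one_toLinearMap, LinearMap.id_coe, id_eq, smul_eq_mul, mul_eq_zero,
        Submodule.mem_bot]
      tauto
    rw [hker]
    simp
  | succ d ih =>
    intro a ha
    by_cases htop : a (Fin.last (d+1)) = 0
    · have hfa : ∑ j : Fin (d+1+1), a j • ((τ^(j:ℕ)).toLinearMap)
          = ∑ j : Fin (d+1), a j.castSucc • ((τ^(j:ℕ)).toLinearMap) := by
        rw [Fin.sum_univ_castSucc, htop, zero_smul, add_zero]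
        exact Finset.sum_congr rfl fun j _ => by simp [Fin.coe_castSucc]
      have ha'0 : (fun j : Fin (d+1) => a j.castSucc) ≠ 0 := by
        intro h0
        apply ha
        funext i
        cases i using Fin.lastCases with
        | last => exact htop
        | cast j => exact congrFun h0 j
      rw [hfa]
      exact le_trans (ih _ ha'0) (by omega)
    · by_cases hker : ker (∑ j : Fin (d+1+1), a j • ((τ^(j:ℕ)).toLinearMap)) = ⊥
      · rw [hker]; simp
      · obtain ⟨u, humem, hu0⟩ := (Submodule.ne_bot_iff _).mp hker
        have hcu : (τ u / u) * u = τ u := div_mul_cancel₀ _ hu0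
        have hc0 : τ u / u ≠ 0 := by
          intro h
          rw [h, zero_mul] at hcu
          exact hu0 (τ.injective (by rw [← hcu, map_zero]))
        set c : K := τ u / u with hc
        set ta : ℕ → K := fun j => if h : j < d+1+1 then a ⟨j, h⟩ else 0 with hta
        set b : ℕ → K := fun i => gseqAux τ c (d+1) ta (d+1 - i) with hb
        have hbD : b (d+1) = 0 := by simp [hb, gseqAux]
        have hrec : ∀ i, i < d+1 → b i = ta (i+1) + b (i+1) * (τ^(i+1) : K ≃ₐ[F] K) c := by
          intro i hi
          have h1 : d+1 - i = (d+1 - (i+1)) + 1 := by omega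
          have h2 : d+1 - (d+1 - (i+1)) = i + 1 := by omega
          rw [hb]
          simp only [h1, gseqAux, h2]
        have hkey : ∀ x : K, ∑ j ∈ Finset.range (d+1+1), ta j * (τ^j : K ≃ₐ[F] K) x
            = (∑ i ∈ Finset.range (d+1), b i * (τ^i : K ≃ₐ[F] K) (τ x - c * x))
              + (ta 0 + b 0 * c) * x := by
          intro x
          rw [Finset.sum_range_succ' (fun j => ta j * (τ^j : K ≃ₐ[F] K) x) (d+1)]
          have e1 : ∀ j ∈ Finset.range (d+1), ta (j+1) * (τ^(j+1) : K ≃ₐ[F] K) x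
              = b j * (τ^(j+1) : K ≃ₐ[F] K) x
                - b (j+1) * (τ^(j+1) : K ≃ₐ[F] K) c * (τ^(j+1) : K ≃ₐ[F] K) x := by
            intro j hj
            rw [Finset.mem_range] at hj
            rw [hrec j hj]; ring
          rw [Finset.sum_congr rfl e1, Finset.sum_sub_distrib]
          have e2 : ∑ j ∈ Finset.range (d+1),
              b (j+1) * (τ^(j+1) : K ≃ₐ[F] K) c * (τ^(j+1) : K ≃ₐ[F] K) x
              = (∑ j ∈ Finset.range (d+1), b j * (τ^j : K ≃ₐ[F] K) c * (τ^j : K ≃ₐ[F] K) x)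
                - b 0 * c * x := by
            have A := Finset.sum_range_succ'
              (fun j => b j * (τ^j : K ≃ₐ[F] K) c * (τ^j : K ≃ₐ[F] K) x) (d+1)
            have B := Finset.sum_range_succ
              (fun j => b j * (τ^j : K ≃ₐ[F] K) c * (τ^j : K ≃ₐ[F] K) x) (d+1)
            rw [hbD, zero_mul, zero_mul, add_zero] at B
            rw [B] at A
            simp only [pow_zero, AlgEquiv.one_apply] at A
            exact eq_sub_of_add_eq A.symm
          rw [e2]
          have e3 : ∀ i ∈ Finset.range (d+1), b i * (τ^i : K ≃ₐ[F] K) (τ x - c * x)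
              = b i * (τ^(i+1) : K ≃ₐ[F] K) x
                - b i * (τ^i : K ≃ₐ[F] K) c * (τ^i : K ≃ₐ[F] K) x := by
            intro i _
            have hτ : (τ^(i+1) : K ≃ₐ[F] K) x = (τ^i : K ≃ₐ[F] K) (τ x) := by
              rw [pow_succ, AlgEquiv.mul_apply]
            rw [map_sub, map_mul, hτ]; ring
          rw [Finset.sum_congr rfl e3, Finset.sum_sub_distrib]
          simp only [pow_zero, AlgEquiv.one_apply]
          ring
        have hfapp : ∀ x : K, (∑ j : Fin (d+1+1), a j • ((τ^(j:ℕ)).toLinearMap)) x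
            = ∑ j ∈ Finset.range (d+1+1), ta j * (τ^j : K ≃ₐ[F] K) x := by
          intro x
          rw [LinearMap.sum_apply,
            ← Fin.sum_univ_eq_sum_range (fun j => ta j * (τ^j : K ≃ₐ[F] K) x) (d+1+1)]
          refine Finset.sum_congr rfl fun j _ => ?_
          simp only [LinearMap.smul_apply, AlgEquiv.toLinearMap_apply, smul_eq_mul, hta]
          rw [dif_pos j.isLt]
        have hr0 : ta 0 + b 0 * c = 0 := by
          have hu := hkey u
          rw [← hfapp u] at hu
          rw [LinearMap.mem_ker.mp humem] at hu
          have hz : τ u - c * u = 0 := by rw [hcu]; ring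
          rw [hz] at hu
          simp only [map_zero, mul_zero, Finset.sum_const_zero, zero_add] at hu
          rcases mul_eq_zero.mp hu.symm with h | h
          · exact h
          · exact absurd h hu0
        have hcomp : ∀ x : K, (∑ j : Fin (d+1+1), a j • ((τ^(j:ℕ)).toLinearMap)) x
            = (∑ i : Fin (d+1), b (i:ℕ) • ((τ^(i:ℕ)).toLinearMap))
              ((τ.toLinearMap - c • (LinearMap.id : K →ₗ[F] K)) x) := by
          intro x
          rw [hfapp x, hkey x, hr0, zero_mul, add_zero, LinearMap.sum_apply,
            ← Fin.sum_univ_eq_sum_range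
              (fun i => b i * (τ^i : K ≃ₐ[F] K) (τ x - c * x)) (d+1)]
          refine Finset.sum_congr rfl fun i _ => ?_
          simp [smul_eq_mul, LinearMap.sub_apply, LinearMap.smul_apply]
        have hble : ker (∑ j : Fin (d+1+1), a j • ((τ^(j:ℕ)).toLinearMap))
            ≤ (ker (∑ i : Fin (d+1), b (i:ℕ) • ((τ^(i:ℕ)).toLinearMap))).comap
              (τ.toLinearMap - c • (LinearMap.id : K →ₗ[F] K)) := by
          intro x hx
          rw [LinearMap.mem_ker] at hx
          rw [Submodule.mem_comap, LinearMap.mem_ker, ← hcomp x]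
          exact hx
        have hbvec : (fun i : Fin (d+1) => b (i:ℕ)) ≠ 0 := by
          intro h0
          have hbd : b d = 0 := congrFun h0 (Fin.last d)
          have hd := hrec d (by omega)
          rw [hbD, zero_mul, add_zero, hbd] at hd
          apply htop
          have hlt : d+1 < d+1+1 := by omega
          have hta1 : ta (d+1) = a (Fin.last (d+1)) := by
            simp only [hta, dif_pos hlt]
            rfl
          rw [← hta1]
          exact hd.symm
        have h1 := ih _ hbvec
        have h2 : ker (τ.toLinearMap - c • (LinearMap.id : K →ₗ[F] K))
            ≤ Submodule.span F {u} := by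
          intro x hx
          rw [LinearMap.mem_ker, LinearMap.sub_apply, LinearMap.smul_apply,
            LinearMap.id_apply, AlgEquiv.toLinearMap_apply, sub_eq_zero, smul_eq_mul] at hx
          by_cases hx0 : x = 0
          · simp [hx0]
          · have hxu : τ (x * u⁻¹) = x * u⁻¹ := by
              rw [map_mul, map_inv₀, hx, ← hcu]
              field_simp
            obtain ⟨r', hr'⟩ := hfix _ hxu
            rw [Submodule.mem_span_singleton]
            refine ⟨r', ?_⟩
            rw [Algebra.smul_def, hr']
            field_simp
        have h3 : finrank F (ker (τ.toLinearMap - c • (LinearMap.id : K →ₗ[F] K))) ≤ 1 := by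
          calc finrank F (ker (τ.toLinearMap - c • (LinearMap.id : K →ₗ[F] K)))
              ≤ finrank F (Submodule.span F {u}) := Submodule.finrank_mono h2
            _ = 1 := finrank_span_singleton hu0
        calc finrank F (ker (∑ j : Fin (d+1+1), a j • ((τ^(j:ℕ)).toLinearMap)))
            ≤ finrank F ((ker (∑ i : Fin (d+1), b (i:ℕ) • ((τ^(i:ℕ)).toLinearMap))).comap
              (τ.toLinearMap - c • (LinearMap.id : K →ₗ[F] K))) :=
              Submodule.finrank_mono hble
          _ ≤ finrank F (ker (∑ i : Fin (d+1), b (i:ℕ) • ((τ^(i:ℕ)).toLinearMap)))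
              + finrank F (ker (τ.toLinearMap - c • (LinearMap.id : K →ₗ[F] K))) :=
              finrank_comap_le_aux _ _
          _ ≤ d + 1 := by omega

private lemma vanish_aux [FiniteDimensional F K] (τ : K ≃ₐ[F] K)
    (hfix : ∀ x : K, τ x = x → ∃ r : F, algebraMap F K r = x) (k : ℕ)
    (a : Fin k → K) (W : Submodule F K) (hW : finrank F W = k)
    (h : ∀ w ∈ W, ∑ j : Fin k, a j * (τ^(j:ℕ) : K ≃ₐ[F] K) w = 0) : a = 0 := by
  by_contra ha
  obtain ⟨d, rfl⟩ : ∃ d, k = d + 1 := by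
    cases k with
    | zero => exact absurd (funext fun i => i.elim0) ha
    | succ d => exact ⟨d, rfl⟩
  have hWle : W ≤ ker (∑ j : Fin (d+1), a j • ((τ^(j:ℕ)).toLinearMap)) := by
    intro w hw
    rw [LinearMap.mem_ker, LinearMap.sum_apply, ← h w hw]
    exact Finset.sum_congr rfl fun j _ => by simp [smul_eq_mul]
  have h1 := Submodule.finrank_mono hWle
  rw [hW] at h1
  have h2 := ker_bound_aux τ hfix d a ha
  omega

private lemma root_aux [Fintype F] [Fintype K] (q : ℕ) (hF : Fintype.card F = q)
    (x : K) (hx : x ^ q = x) : ∃ r : F, algebraMap F K r = x := by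
  classical
  have hq1 : 1 < q := hF ▸ Fintype.one_lt_card
  set P : Polynomial K := Polynomial.X ^ q - Polynomial.X with hP
  have hPc : P.coeff q = 1 := by
    simp [hP, Polynomial.coeff_X_pow, Polynomial.coeff_X]
    omega
  have hP0 : P ≠ 0 := fun h => by simp [h] at hPc
  have hdeg : P.natDegree ≤ q := by
    refine le_trans (Polynomial.natDegree_sub_le _ _) ?_
    simp [Polynomial.natDegree_X_pow, Polynomial.natDegree_X]
    omega
  have hroot : ∀ y : K, y ^ q = y → y ∈ P.roots.toFinset := by
    intro y hy
    rw [Multiset.mem_toFinset, Polynomial.mem_roots hP0]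
    simp [Polynomial.IsRoot, hP, hy]
  set img : Finset K := Finset.univ.image (algebraMap F K) with himg
  have hsub : img ⊆ P.roots.toFinset := by
    intro y hy
    rw [himg, Finset.mem_image] at hy
    obtain ⟨r, _, rfl⟩ := hy
    refine hroot _ ?_
    rw [← map_pow, ← hF, FiniteField.pow_card]
  have hcard1 : img.card = q := by
    rw [himg, Finset.card_image_of_injective _ (algebraMap F K).injective, ← hF]
    simp
  have hcard2 : P.roots.toFinset.card ≤ q :=
    le_trans (Multiset.toFinset_card_le _) (le_trans (Polynomial.card_roots' P) hdeg)
  have heq : img = P.roots.toFinset :=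
    Finset.eq_of_subset_of_card_le hsub (by omega)
  have hxmem : x ∈ img := heq ▸ hroot x hx
  rw [himg, Finset.mem_image] at hxmem
  obtain ⟨r, _, hr⟩ := hxmem
  exact ⟨r, hr⟩

private lemma zpow_fix_aux (e : K ≃+* K) (x : K) (hx : e x = x) (z : ℤ) : (e ^ z) x = x := by
  have hmul : ∀ (e1 e2 : K ≃+* K) (y : K), (e1 * e2) y = e1 (e2 y) := fun _ _ _ => rfl
  have hnat : ∀ n : ℕ, (e ^ n) x = x := by
    intro n
    induction n with
    | zero => rfl
    | succ n ih => rw [pow_succ, hmul, hx, ih]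
  have hinv : (e⁻¹) x = x := by
    conv_lhs => rw [← hx]
    exact e.symm_apply_apply x
  have hninv : ∀ n : ℕ, ((e⁻¹) ^ n) x = x := by
    intro n
    induction n with
    | zero => rfl
    | succ n ih => rw [pow_succ, hmul, hinv, ih]
  rcases z with n | n
  · simpa using hnat n
  · rw [zpow_negSucc, ← inv_pow]
    exact hninv (n+1)

end AuxLemmas

/-- Let `q` be an odd prime power, `U` a `k`-dimensional `F_q`-subspace of
`V = F_{q^m}`, `ℓ` an integer, and `s` a positive integer coprime to `m`. Then every
`F_q`-bilinear form `B : U × V → F_q` can be written uniquely as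
`B(x,y) = Tr(∑_{j=0}^{k-1} a_j · y · x^{q^{s(j-ℓ)}})` with `a_0, …, a_{k-1} ∈ F_{q^m}`,
where `Tr` is the field trace of `F_{q^m}/F_q` and the (possibly negative) powers of the
Frobenius `φ : x ↦ x^q` are interpreted in the automorphism group. -/
theorem bilinear_form_trace_representation (q m k s : ℕ) (ℓ : ℤ)
    (F K : Type*) [Field F] [Field K] [Fintype F] [Fintype K] [Algebra F K]
    (hF : Fintype.card F = q) (hodd : Odd q)
    (hm : Module.finrank F K = m) (hs : 0 < s) (hsm : Nat.gcd s m = 1)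
    (φ : K ≃+* K) (hφ : ∀ x : K, φ x = x ^ q)
    (U : Submodule F K) (hU : Module.finrank F U = k)
    (B : U →ₗ[F] K →ₗ[F] F) :
    ∃! a : Fin k → K, ∀ (x : U) (y : K),
      B x y = Algebra.trace F K
        (∑ j : Fin k, a j * y * (φ ^ ((s : ℤ) * (((j : ℕ) : ℤ) - ℓ))) (x : K)) := by
  classical
  have hfixφ : ∀ r : F, φ (algebraMap F K r) = algebraMap F K r := by
    intro r
    rw [hφ, ← map_pow, ← hF, FiniteField.pow_card]
  set ψ : K ≃ₐ[F] K := AlgEquiv.ofRingEquiv (f := φ) hfixφ with hψ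
  set aeH : (K ≃ₐ[F] K) →* (K ≃+* K) :=
    { toFun := AlgEquiv.toRingEquiv, map_one' := rfl, map_mul' := fun _ _ => rfl } with haeHdef
  have haeH : ∀ (z : ℤ) (x : K), ((ψ^z : K ≃ₐ[F] K) : K → K) x = (φ^z) x := by
    intro z x
    have h1 : aeH (ψ^z) = φ^z := by rw [map_zpow]; rfl
    exact DFunLike.congr_fun h1 x
  have haeHn : ∀ (n : ℕ) (x : K), ((ψ^n : K ≃ₐ[F] K) : K → K) x = (φ^n) x := by
    intro n x
    have h1 : aeH (ψ^n) = φ^n := by rw [map_pow]; rfl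
    exact DFunLike.congr_fun h1 x
  have hφn : ∀ (n : ℕ) (x : K), (φ^n) x = x ^ q ^ n := by
    intro n
    induction n with
    | zero => intro x; rw [pow_zero, pow_zero, pow_one]; rfl
    | succ n ih =>
      intro x
      have hmul : ∀ (e1 e2 : K ≃+* K) (y : K), (e1 * e2) y = e1 (e2 y) := fun _ _ _ => rfl
      rw [pow_succ, hmul, hφ, ih, ← pow_mul, pow_succ, mul_comm (q^n) q, pow_mul]
  have hφm : φ ^ m = 1 := by
    ext x
    have hcard : Fintype.card K = q ^ m := by
      rw [card_eq_pow_finrank (K := F) (V := K), hF, hm]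
    rw [hφn m x, ← hcard, FiniteField.pow_card]
    rfl
  -- fixed points of τ = ψ^s
  have hfixτ : ∀ x : K, (ψ^s : K ≃ₐ[F] K) x = x → ∃ r : F, algebraMap F K r = x := by
    intro x hx
    have hx' : (φ^s) x = x := by rw [← haeHn s x, hx]
    have hφx : φ x = x := by
      have hb := Nat.gcd_eq_gcd_ab s m
      rw [hsm] at hb
      have hsplit : φ = (φ^(s:ℤ))^(Nat.gcdA s m) * (φ^(m:ℤ))^(Nat.gcdB s m) := by
        calc φ = φ^(1:ℤ) := (zpow_one φ).symm
          _ = φ^((s:ℤ) * Nat.gcdA s m + (m:ℤ) * Nat.gcdB s m) := by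
              rw [← hb]; norm_num
          _ = φ^((s:ℤ) * Nat.gcdA s m) * φ^((m:ℤ) * Nat.gcdB s m) := zpow_add φ _ _
          _ = (φ^(s:ℤ))^(Nat.gcdA s m) * (φ^(m:ℤ))^(Nat.gcdB s m) := by
              rw [zpow_mul, zpow_mul]
      have h2 : (φ^(m:ℤ)) = 1 := by rw [zpow_natCast, hφm]
      have h3 : (φ^(s:ℤ)) x = x := by rw [zpow_natCast]; exact hx'
      have hmul : ∀ (e1 e2 : K ≃+* K) (y : K), (e1 * e2) y = e1 (e2 y) := fun _ _ _ => rfl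
      rw [hsplit, h2, one_zpow, mul_one]
      exact zpow_fix_aux _ x h3 _
    refine root_aux q hF x ?_
    rw [← hφ, hφx]
  -- the trace-form equivalence
  have hnd := traceForm_nondegenerate F K
  set Teq : K ≃ₗ[F] Module.Dual F K := (Algebra.traceForm F K).toDual hnd with hTeq
  -- the family of linear maps
  set E : Fin k → (U →ₗ[F] K) := fun j =>
    ((ψ^((s:ℤ) * (((j:ℕ):ℤ) - ℓ)) : K ≃ₐ[F] K).toLinearMap).comp U.subtype with hE
  set Ψ : (Fin k → K) →ₗ[F] (U →ₗ[F] K) :=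
    { toFun := fun a => ∑ j : Fin k, a j • E j
      map_add' := by
        intro a a'
        simp only [Pi.add_apply, add_smul]
        rw [Finset.sum_add_distrib]
      map_smul' := by
        intro r a
        simp only [Pi.smul_apply, RingHom.id_apply]
        rw [Finset.smul_sum]
        exact Finset.sum_congr rfl fun j _ => smul_assoc r (a j) (E j) } with hΨ
  have hΨapp : ∀ (a : Fin k → K) (x : U),
      Ψ a x = ∑ j : Fin k, a j * (ψ^((s:ℤ) * (((j:ℕ):ℤ) - ℓ)) : K ≃ₐ[F] K) (x:K) := by
    intro a x
    rw [hΨ]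
    simp only [LinearMap.coe_mk, AddHom.coe_mk, LinearMap.sum_apply, LinearMap.smul_apply,
      hE, LinearMap.coe_comp, Function.comp_apply, Submodule.coe_subtype,
      AlgEquiv.toLinearMap_apply, smul_eq_mul]
  -- injectivity of Ψ
  have hinj : Function.Injective Ψ := by
    rw [← LinearMap.ker_eq_bot, LinearMap.ker_eq_bot']
    intro a ha
    set ρ : K ≃ₗ[F] K := (ψ^(-((s:ℤ) * ℓ)) : K ≃ₐ[F] K).toLinearEquiv with hρ
    have hWrank : finrank F (U.map (ρ : K →ₗ[F] K)) = k := by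
      rw [LinearEquiv.finrank_map_eq, hU]
    refine vanish_aux (ψ^s) hfixτ k a (U.map (ρ : K →ₗ[F] K)) hWrank ?_
    intro w hw
    rw [Submodule.mem_map] at hw
    obtain ⟨x, hxU, rfl⟩ := hw
    have hcoe : ∀ j : Fin k, ((ψ^s)^(j:ℕ) : K ≃ₐ[F] K) (ρ x)
        = (ψ^((s:ℤ) * (((j:ℕ):ℤ) - ℓ)) : K ≃ₐ[F] K) x := by
      intro j
      have h1 : ((ψ^s)^(j:ℕ) : K ≃ₐ[F] K) = ψ^((s * (j:ℕ) : ℕ) : ℤ) := by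
        rw [zpow_natCast, pow_mul]
      have h2 : (ρ : K →ₗ[F] K) x = (ψ^(-((s:ℤ) * ℓ)) : K ≃ₐ[F] K) x := rfl
      have h3 : ((ψ^s)^(j:ℕ) : K ≃ₐ[F] K) ((ψ^(-((s:ℤ) * ℓ)) : K ≃ₐ[F] K) x)
          = (ψ^(((s * (j:ℕ) : ℕ) : ℤ) + -((s:ℤ) * ℓ)) : K ≃ₐ[F] K) x := by
        rw [h1, zpow_add]
        rfl
      have h4 : (((s * (j:ℕ) : ℕ) : ℤ) + -((s:ℤ) * ℓ)) = (s:ℤ) * (((j:ℕ):ℤ) - ℓ) := by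
        push_cast
        ring
      calc ((ψ^s)^(j:ℕ) : K ≃ₐ[F] K) (ρ x)
          = (ψ^(((s * (j:ℕ) : ℕ) : ℤ) + -((s:ℤ) * ℓ)) : K ≃ₐ[F] K) x := h3
        _ = (ψ^((s:ℤ) * (((j:ℕ):ℤ) - ℓ)) : K ≃ₐ[F] K) x := by rw [h4]
    calc ∑ j : Fin k, a j * ((ψ^s)^(j:ℕ) : K ≃ₐ[F] K) ((ρ : K →ₗ[F] K) x)
        = ∑ j : Fin k, a j * (ψ^((s:ℤ) * (((j:ℕ):ℤ) - ℓ)) : K ≃ₐ[F] K) x :=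
          Finset.sum_congr rfl fun j _ => by rw [← hcoe j]; rfl
      _ = Ψ a ⟨x, hxU⟩ := (hΨapp a ⟨x, hxU⟩).symm
      _ = 0 := by rw [ha]; rfl
  -- dimension count
  have hdim : finrank F (Fin k → K) = finrank F (U →ₗ[F] K) := by
    rw [Module.finrank_pi_fintype, finrank_linearMap]
    simp [hm, hU, mul_comm]
  set Φ : (Fin k → K) ≃ₗ[F] (U →ₗ[F] K) := LinearMap.linearEquivOfInjective Ψ hinj hdim
    with hΦ
  have hΦapp : ∀ a, Φ a = Ψ a := fun a => rfl
  -- connecting the statement with Ψ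
  set Cmap : U →ₗ[F] K := (Teq.symm : Module.Dual F K →ₗ[F] K).comp B with hCmap
  have hTB : ∀ (x : U) (c : K), (B x = Teq c) ↔ Cmap x = c := by
    intro x c
    constructor
    · intro h
      rw [hCmap]
      simp only [LinearMap.coe_comp, Function.comp_apply, LinearEquiv.coe_coe]
      rw [h, LinearEquiv.symm_apply_apply]
    · intro h
      rw [hCmap] at h
      simp only [LinearMap.coe_comp, Function.comp_apply, LinearEquiv.coe_coe] at h
      rw [← h, LinearEquiv.apply_symm_apply]
  have hPiff : ∀ a : Fin k → K,
      (∀ (x : U) (y : K), B x y = Algebra.trace F K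
        (∑ j : Fin k, a j * y * (φ ^ ((s : ℤ) * (((j : ℕ) : ℤ) - ℓ))) (x : K)))
      ↔ Ψ a = Cmap := by
    intro a
    have htr : ∀ (x : U) (y : K),
        Algebra.trace F K (∑ j : Fin k, a j * y * (φ ^ ((s : ℤ) * (((j:ℕ):ℤ) - ℓ))) (x : K))
        = Teq (Ψ a x) y := by
      intro x y
      rw [hTeq]
      rw [LinearMap.BilinForm.toDual_def]
      rw [Algebra.traceForm_apply]
      congr 1
      rw [hΨapp, Finset.sum_mul]
      refine Finset.sum_congr rfl fun j _ => ?_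
      rw [haeH]
      ring
    constructor
    · intro h
      ext x
      exact ((hTB x (Ψ a x)).mp (by ext y; rw [h x y, htr x y])).symm
    · intro h x y
      rw [htr x y, h]
      rw [hCmap]
      simp only [LinearMap.coe_comp, Function.comp_apply, LinearEquiv.coe_coe]
      rw [LinearEquiv.apply_symm_apply]
  refine ⟨Φ.symm Cmap, ?_, ?_⟩
  · exact (hPiff _).mpr (by rw [← hΦapp, LinearEquiv.apply_symm_apply])
  · intro a ha
    rw [hPiff] at ha
    have hΦa : Φ a = Cmap := by rw [hΦapp]; exact ha
    rw [← hΦa, LinearEquiv.symm_apply_apply]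
end

section
/- Let q be an odd prime power, m a positive integer, s a positive integer coprime to m, and t an integer with 0 ≤ t ≤ (m-1)/2. For λ = (λ_0,…,λ_t) ∈ F_{q^m}^{t+1}, define the symmetric bilinear form B_λ(x,y) = Tr(λ_0 x y + Σ_{j=1}^{t} λ_j (x^{q^{sj}} y + x y^{q^{sj}})) on F_{q^m} over F_q. If λ ≠ 0, then B_λ has rank at least m - 2t. -/
open Finset

section Aux

variable {F K : Type*} [Field F] [Field K] [Algebra F K]

/-- Trace is invariant under `F`-algebra automorphisms. -/
lemma trace_algEquiv_invariant (φ : K ≃ₐ[F] K) (z : K) :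
    Algebra.trace F K (φ z) = Algebra.trace F K z := by
  have h : (Algebra.lmul F K) (φ z) = φ.toLinearEquiv.conj ((Algebra.lmul F K) z) := by
    ext w
    simp [LinearEquiv.conj_apply, Algebra.lmul, mul_comm]
  have h1 : Algebra.trace F K (φ z) = LinearMap.trace F K ((Algebra.lmul F K) (φ z)) := rfl
  have h2 : Algebra.trace F K z = LinearMap.trace F K ((Algebra.lmul F K) z) := rfl
  rw [h1, h2, h, LinearMap.trace_conj']

/-- If every element of a finset satisfies `x ^ N = x` with `N > 1`, the finset has
at most `N` elements. -/
lemma card_le_of_pow_eq {N : ℕ} (hN : 1 < N) (S : Finset K) (h : ∀ x ∈ S, x ^ N = x) :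
    S.card ≤ N := by
  classical
  set P : Polynomial K := Polynomial.X ^ N - Polynomial.X with hP
  have hdeg : P.natDegree = N := by
    rw [hP]
    compute_degree
    · rw [if_neg (by omega : ¬ 1 = N)]; simp
    · omega
  have hP0 : P ≠ 0 := fun h0 => by simp [h0] at hdeg; omega
  have hsub : S ⊆ P.roots.toFinset := by
    intro x hx
    rw [Multiset.mem_toFinset, Polynomial.mem_roots hP0]
    simp [hP, Polynomial.IsRoot, sub_eq_zero, h x hx]
  calc S.card ≤ P.roots.toFinset.card := Finset.card_le_card hsub
    _ ≤ Multiset.card P.roots := Multiset.toFinset_card_le _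
    _ ≤ P.natDegree := P.card_roots'
    _ = N := hdeg

end Aux
section Frob

variable {F K : Type*} [Field F] [Field K] [Fintype F] [Fintype K] [Algebra F K]
variable {q : ℕ}

lemma F_pow_fix (hF : Fintype.card F = q) : ∀ (e : ℕ) (c : F), c ^ q ^ e = c := by
  intro e
  induction e with
  | zero => intro c; simp
  | succ e ih =>
    intro c
    have : q ^ (e + 1) = q ^ e * q := pow_succ q e
    rw [this, pow_mul, ih c, ← hF, FiniteField.pow_card]

/-- The `e`-th power of the `q`-Frobenius as an `F`-algebra equivalence of `K`. -/
lemma exists_frobEquiv (hF : Fintype.card F = q) (e : ℕ) :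
    ∃ φ : K ≃ₐ[F] K, ∀ z : K, φ z = z ^ q ^ e := by
  classical
  set p := ringChar F with hp
  haveI : CharP F p := ringChar.charP F
  haveI : CharP K p := charP_of_injective_algebraMap (algebraMap F K).injective p
  obtain ⟨n, hpp, hq⟩ := FiniteField.card F p
  haveI : Fact p.Prime := ⟨hpp⟩
  rw [hF] at hq
  have hqe : q ^ e = p ^ ((n : ℕ) * e) := by rw [hq, ← pow_mul]
  have hq0 : q ^ e ≠ 0 := by
    rw [hq]; exact pow_ne_zero _ (pow_ne_zero _ hpp.pos.ne')
  let ψ : K →ₐ[F] K :=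
    { toFun := fun z => z ^ q ^ e
      map_one' := one_pow _
      map_mul' := fun a b => mul_pow a b _
      map_zero' := zero_pow hq0
      map_add' := fun a b => by
        show (a + b) ^ q ^ e = a ^ q ^ e + b ^ q ^ e
        rw [hqe]; exact add_pow_char_pow a b p _
      commutes' := fun c => by
        show ((algebraMap F K) c) ^ q ^ e = (algebraMap F K) c
        rw [← map_pow, F_pow_fix hF e c] }
  have hbij : Function.Bijective ψ :=
    (Finite.injective_iff_bijective).mp ψ.toRingHom.injective
  exact ⟨AlgEquiv.ofBijective ψ hbij, fun z => rfl⟩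

lemma pow_qe_injective (hF : Fintype.card F = q) (e : ℕ) :
    Function.Injective (fun z : K => z ^ q ^ e) := by
  obtain ⟨φ, hφ⟩ := exists_frobEquiv (F := F) (K := K) hF e
  have : (fun z : K => z ^ q ^ e) = ⇑φ := by funext z; rw [hφ]
  rw [this]
  exact φ.injective

lemma pow_q_gcd (hF : Fintype.card F = q) :
    ∀ (a b : ℕ) (x : K), x ^ q ^ a = x → x ^ q ^ b = x → x ^ q ^ Nat.gcd a b = x := by
  have hmul : ∀ (a k : ℕ) (x : K), x ^ q ^ a = x → x ^ q ^ (a * k) = x := by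
    intro a k
    induction k with
    | zero => intro x _; simp
    | succ k ih =>
      intro x hx
      have : q ^ (a * (k + 1)) = q ^ (a * k) * q ^ a := by ring
      rw [this, pow_mul, ih x hx, hx]
  intro a b
  induction a, b using Nat.gcd.induction with
  | H0 b => intro x _ hb; simpa using hb
  | H1 a b ha ih =>
    intro x hxa hxb
    rw [Nat.gcd_rec]
    refine ih x ?_ hxa
    -- show x ^ q ^ (b % a) = x
    have h1 : (x ^ q ^ (b % a)) ^ q ^ (a * (b / a)) = x := by
      rw [← pow_mul, ← pow_add]
      have hba : b % a + a * (b / a) = b := by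
        rw [Nat.add_comm]; exact Nat.div_add_mod b a
      rw [hba, hxb]
    have h2 : x ^ q ^ (a * (b / a)) = x := hmul a _ x hxa
    exact pow_qe_injective (F := F) (K := K) hF (a * (b / a))
      (by simpa using h1.trans h2.symm)

end Frob
section Fixed

variable {F K : Type*} [Field F] [Field K] [Fintype F] [Fintype K] [Algebra F K]
variable {q m : ℕ}

lemma K_pow_qm (hF : Fintype.card F = q) (hm : Module.finrank F K = m) (z : K) :
    z ^ q ^ m = z := by
  have hcard : Fintype.card K = q ^ m := by
    rw [← hF, ← hm]; exact Module.card_eq_pow_finrank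
  rw [← hcard]; exact FiniteField.pow_card z

/-- If every `z : K` satisfies `z ^ q ^ a = z`, then `m ∣ a`. -/
lemma m_dvd_of_pow_fix (hF : Fintype.card F = q) (hm : Module.finrank F K = m)
    (hm0 : 0 < m) (a : ℕ) (h : ∀ z : K, z ^ q ^ a = z) : m ∣ a := by
  classical
  have hq1 : 1 < q := by rw [← hF]; exact Fintype.one_lt_card
  set g := Nat.gcd a m with hg
  have hg0 : 0 < g := Nat.gcd_pos_of_pos_right a hm0
  have hfix : ∀ z : K, z ^ q ^ g = z := fun z =>
    pow_q_gcd (F := F) hF a m z (h z) (K_pow_qm hF hm z)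
  have hcardle : Fintype.card K ≤ q ^ g := by
    have := card_le_of_pow_eq (K := K) (N := q ^ g)
      (one_lt_pow₀ hq1 hg0.ne') Finset.univ (fun x _ => hfix x)
    simpa using this
  have hcard : Fintype.card K = q ^ m := by
    rw [← hF, ← hm]; exact Module.card_eq_pow_finrank
  rw [hcard] at hcardle
  have hmg : m ≤ g := (pow_le_pow_iff_right₀ hq1).mp hcardle
  have hgm : g ≤ m := Nat.le_of_dvd hm0 (Nat.gcd_dvd_right a m)
  have : g = m := le_antisymm hgm hmg
  rw [← this]; exact Nat.gcd_dvd_left a m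

/-- Fixed points of `z ↦ z ^ q ^ s` with `gcd s m = 1` lie in the base field. -/
lemma fixed_in_base (hF : Fintype.card F = q) (hm : Module.finrank F K = m)
    {s : ℕ} (hsm : Nat.gcd s m = 1) (x : K) (hx : x ^ q ^ s = x) :
    ∃ c : F, algebraMap F K c = x := by
  classical
  have hq1 : 1 < q := by rw [← hF]; exact Fintype.one_lt_card
  have hxq : x ^ q = x := by
    have := pow_q_gcd (F := F) hF s m x hx (K_pow_qm hF hm x)
    rwa [hsm, pow_one] at this
  set S : Finset K := Finset.univ.filter (fun z : K => z ^ q = z) with hS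
  have hScard : S.card ≤ q := card_le_of_pow_eq hq1 S (by
    intro z hz
    simpa [hS] using (Finset.mem_filter.mp hz).2)
  set T : Finset K := Finset.univ.image (algebraMap F K) with hT
  have hTcard : T.card = q := by
    rw [hT, Finset.card_image_of_injective _ (algebraMap F K).injective, Finset.card_univ, hF]
  have hTS : T ⊆ S := by
    intro z hz
    rw [hT, Finset.mem_image] at hz
    obtain ⟨c, _, rfl⟩ := hz
    rw [hS, Finset.mem_filter]
    refine ⟨Finset.mem_univ _, ?_⟩
    rw [← map_pow, ← hF, FiniteField.pow_card]
  have : T = S := Finset.eq_of_subset_of_card_le hTS (by omega)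
  have hxS : x ∈ S := by rw [hS, Finset.mem_filter]; exact ⟨Finset.mem_univ _, hxq⟩
  rw [← this, hT, Finset.mem_image] at hxS
  obtain ⟨c, _, hc⟩ := hxS
  exact ⟨c, hc⟩

end Fixed
section KerBound

variable {F K : Type*} [Field F] [Field K] [Algebra F K]

private lemma iter_add (σ : K → K) (hadd : ∀ a b, σ (a + b) = σ a + σ b) :
    ∀ (k : ℕ) (a b : K), σ^[k] (a + b) = σ^[k] a + σ^[k] b := by
  intro k
  induction k with
  | zero => intro a b; simp
  | succ k ih =>
    intro a b
    rw [Function.iterate_succ_apply, hadd, ih]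
    simp [Function.iterate_succ_apply]

private lemma iter_mul (σ : K → K) (hmul : ∀ a b, σ (a * b) = σ a * σ b) :
    ∀ (k : ℕ) (a b : K), σ^[k] (a * b) = σ^[k] a * σ^[k] b := by
  intro k
  induction k with
  | zero => intro a b; simp
  | succ k ih =>
    intro a b
    rw [Function.iterate_succ_apply, hmul, ih]
    simp [Function.iterate_succ_apply]

private lemma iter_zero (σ : K → K) (hz : σ 0 = 0) :
    ∀ (k : ℕ), σ^[k] (0 : K) = 0 := by
  intro k
  induction k with
  | zero => simp
  | succ k ih => rw [Function.iterate_succ_apply, hz, ih]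

/-- Skew-polynomial division: `∑ b_k σ^k = G ∘ (σ - c) + r·id`. -/
private lemma div_lemma (σ : K → K) (hadd : ∀ a b, σ (a + b) = σ a + σ b)
    (hmul : ∀ a b, σ (a * b) = σ a * σ b) (c : K) :
    ∀ (n : ℕ) (b : ℕ → K), ∃ (g : ℕ → K) (r : K), ∀ x : K,
      ∑ k ∈ Finset.range (n + 1), b k * σ^[k] x
        = (∑ k ∈ Finset.range n, g k * σ^[k] (σ x - c * x)) + r * x := by
  intro n
  induction n with
  | zero =>
    intro b
    exact ⟨0, b 0, fun x => by simp⟩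
  | succ n ih =>
    intro b
    obtain ⟨g₂, r₂, hg₂⟩ := ih (fun k => b (k + 1) * σ^[k] c)
    refine ⟨fun k => b (k + 1) + (if k < n then g₂ k else 0), b 0 + r₂, fun x => by
      have hsplit : ∑ k ∈ Finset.range (n + 2), b k * σ^[k] x
          = (∑ k ∈ Finset.range (n + 1), b (k + 1) * σ^[k+1] x) + b 0 * x := by
        rw [Finset.sum_range_succ' (fun k => b k * σ^[k] x) (n + 1)]
        simp
      rw [hsplit]
      have hterm : ∀ k ∈ Finset.range (n + 1), b (k + 1) * σ^[k+1] x
          = b (k + 1) * σ^[k] (σ x - c * x) + (b (k + 1) * σ^[k] c) * σ^[k] x := by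
        intro k _
        have h1 : σ^[k+1] x = σ^[k] (σ x) := Function.iterate_succ_apply σ k x
        have h2 : σ x = (σ x - c * x) + c * x := by ring
        rw [h1, h2, iter_add σ hadd, iter_mul σ hmul]
        ring
      rw [Finset.sum_congr rfl hterm, Finset.sum_add_distrib, hg₂ x]
      have hite : ∑ k ∈ Finset.range (n + 1),
            (b (k + 1) + (if k < n then g₂ k else 0)) * σ^[k] (σ x - c * x)
          = (∑ k ∈ Finset.range (n + 1), b (k + 1) * σ^[k] (σ x - c * x))
            + ∑ k ∈ Finset.range n, g₂ k * σ^[k] (σ x - c * x) := by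
        have e1 : ∀ k ∈ Finset.range (n + 1),
            (b (k + 1) + (if k < n then g₂ k else 0)) * σ^[k] (σ x - c * x)
            = b (k + 1) * σ^[k] (σ x - c * x)
              + (if k < n then g₂ k else 0) * σ^[k] (σ x - c * x) := fun k _ => by ring
        rw [Finset.sum_congr rfl e1, Finset.sum_add_distrib]
        congr 1
        rw [Finset.sum_range_succ, if_neg (lt_irrefl n), zero_mul, add_zero]
        exact Finset.sum_congr rfl (fun k hk => by rw [if_pos (Finset.mem_range.mp hk)])
      rw [hite]
      ring⟩

lemma ker_bound [FiniteDimensional F K] (σ : K →ₐ[F] K)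
    (hfix : ∀ x : K, σ x = x → ∃ c : F, algebraMap F K c = x) :
    ∀ (n : ℕ) (b : ℕ → K),
      (∃ z : K, ∑ k ∈ Finset.range (n + 1), b k * (⇑σ)^[k] z ≠ 0) →
      ∀ W : Submodule F K, (∀ x ∈ W, ∑ k ∈ Finset.range (n + 1), b k * (⇑σ)^[k] x = 0) →
      Module.finrank F W ≤ n := by
  intro n
  induction n with
  | zero =>
    intro b hnz W hW
    obtain ⟨z, hz⟩ := hnz
    have hb0 : b 0 ≠ 0 := fun h => hz (by simp [h])
    have : W = ⊥ := by
      rw [eq_bot_iff]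
      intro x hx
      have := hW x hx
      simp only [zero_add, Finset.sum_range_one, Function.iterate_zero, id_eq] at this
      have : x = 0 := by
        rcases mul_eq_zero.mp this with h | h
        · exact absurd h hb0
        · exact h
      simpa [this] using Submodule.zero_mem _
    rw [this, finrank_bot]
  | succ n ih =>
    intro b hnz W hW
    by_cases hWv : ∃ v ∈ W, v ≠ (0 : K)
    · obtain ⟨v, hvW, hv0⟩ := hWv
      set c : K := σ v / v with hc
      obtain ⟨g, r, hdiv⟩ := div_lemma ⇑σ (map_add σ) (map_mul σ) c (n + 1) b
      have hLv : σ v - c * v = 0 := by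
        rw [hc, div_mul_cancel₀ _ hv0, sub_self]
      have hr : r = 0 := by
        have h0 := hW v hvW
        rw [hdiv v, hLv] at h0
        simp only [iter_zero ⇑σ (map_zero σ), mul_zero, Finset.sum_const_zero, zero_add] at h0
        exact (mul_eq_zero.mp h0).resolve_right hv0
      -- the linear map L
      set L : K →ₗ[F] K := σ.toLinearMap - LinearMap.mulLeft F c with hLdef
      have hLapp : ∀ x : K, L x = σ x - c * x := fun x => rfl
      -- G nonzero somewhere
      have hGnz : ∃ z : K, ∑ k ∈ Finset.range (n + 1), g k * (⇑σ)^[k] z ≠ 0 := by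
        obtain ⟨z, hz⟩ := hnz
        refine ⟨σ z - c * z, fun h => hz ?_⟩
        rw [hdiv z, h, hr]; ring
      -- the image subspace
      have hW' : ∀ y ∈ W.map L, ∑ k ∈ Finset.range (n + 1), g k * (⇑σ)^[k] y = 0 := by
        rintro y ⟨x, hxW, rfl⟩
        have h0 := hW x hxW
        rw [hdiv x, hr] at h0
        rw [hLapp]
        simpa using h0
      have hrange := ih g hGnz (W.map L) hW'
      -- rank-nullity
      set f : W →ₗ[F] K := L.domRestrict W with hf
      have hrn : Module.finrank F (LinearMap.range f) + Module.finrank F (LinearMap.ker f)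
          = Module.finrank F W := LinearMap.finrank_range_add_finrank_ker f
      have hrange' : LinearMap.range f = W.map L := LinearMap.range_domRestrict W L
      have hker : Module.finrank F (LinearMap.ker f) ≤ 1 := by
        have hsub : (LinearMap.ker f).map W.subtype ≤ Submodule.span F {v} := by
          rintro _ ⟨⟨x, hxW⟩, hxker, rfl⟩
          have hL0 : L x = 0 := by simpa [hf] using hxker
          have hσx : σ x = c * x :=
            sub_eq_zero.mp ((hLapp x).symm.trans hL0)
          by_cases hx0 : x = 0
          · simp [hx0, Submodule.zero_mem]
          · have hσv0 : σ v ≠ 0 := fun h => hv0 (map_eq_zero_iff σ σ.toRingHom.injective |>.mp h)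
            have hfixpt : σ (x / v) = x / v := by
              rw [map_div₀, hσx, hc]
              field_simp
            obtain ⟨d, hd⟩ := hfix _ hfixpt
            have : x = d • v := by
              rw [Algebra.smul_def, hd, div_mul_cancel₀ _ hv0]
            rw [Submodule.mem_span_singleton]
            exact ⟨d, this.symm⟩
        have h1 : Module.finrank F ((LinearMap.ker f).map W.subtype)
            ≤ Module.finrank F (Submodule.span F {v}) := Submodule.finrank_mono hsub
        have h2 : Module.finrank F (Submodule.span F {v}) = 1 := finrank_span_singleton hv0
        have h3 : Module.finrank F (LinearMap.ker f)
            = Module.finrank F ((LinearMap.ker f).map W.subtype) := by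
          rw [Submodule.finrank_map_subtype_eq]
        omega
      have : Module.finrank F (LinearMap.range f) ≤ n := by rw [hrange']; exact hrange
      omega
    · have : W = ⊥ := by
        rw [eq_bot_iff]
        intro x hx
        by_contra hx0
        exact hWv ⟨x, hx, fun h => hx0 (by simp [h])⟩
      rw [this, finrank_bot]
      omega

end KerBound



/-- The symmetric bilinear form
`B_λ(x,y) = Tr(λ_0 x y + ∑_{j=1}^{t} λ_j (x^{q^{sj}} y + x y^{q^{sj}}))` on `F_{q^m}`
over `F_q`, where `Tr` is the field trace. -/
noncomputable def Bform (F K : Type*) [Field F] [Field K] [Algebra F K]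
    (q s t : ℕ) (l : Fin (t + 1) → K) (x y : K) : F :=
  Algebra.trace F K
    (l 0 * (x * y) +
      ∑ j ∈ Finset.univ.filter (fun j : Fin (t + 1) => (j : ℕ) ≠ 0),
        l j * (x ^ (q ^ (s * (j : ℕ))) * y + x * y ^ (q ^ (s * (j : ℕ)))))

/-- Let `q` be an odd prime power, `s` a positive integer coprime to `m`,
and `0 ≤ t ≤ (m-1)/2`. If `λ ≠ 0`, then the symmetric bilinear form `B_λ` on
`F_{q^m}` over `F_q` has rank at least `m - 2t`; equivalently, every `F_q`-subspace
contained in the radical of `B_λ` has dimension at most `2t`. -/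
theorem Bform_rank_ge (q m s t : ℕ)
    (F K : Type*) [Field F] [Field K] [Fintype F] [Fintype K] [Algebra F K]
    (hF : Fintype.card F = q) (hodd : Odd q)
    (hm : Module.finrank F K = m) (hs : 0 < s) (hsm : Nat.gcd s m = 1)
    (ht : 2 * t + 1 ≤ m)
    (l : Fin (t + 1) → K) (hl : l ≠ 0) :
    ∀ W : Submodule F K, (∀ x ∈ W, ∀ y : K, Bform F K q s t l x y = 0) →
      Module.finrank F W ≤ 2 * t := by
    classical
  intro W hW
  haveI : FiniteDimensional F K := Module.Finite.of_finite
  haveI : Algebra.IsAlgebraic F K := Algebra.IsAlgebraic.of_finite F K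
  haveI : Algebra.IsSeparable F K := inferInstance
  have hm0 : 0 < m := by omega
  have hq1 : 1 < q := by rw [← hF]; exact Fintype.one_lt_card
  -- power arithmetic
  have powpow : ∀ (z : K) (a b : ℕ), (z ^ q ^ (s * a)) ^ q ^ (s * b) = z ^ q ^ (s * (a + b)) := by
    intro z a b
    rw [← pow_mul, ← pow_add, ← Nat.mul_add]
  have hsm' : ∀ z : K, z ^ q ^ (s * m) = z := by
    have key : ∀ (c : ℕ) (z : K), z ^ q ^ (c * m) = z := by
      intro c
      induction c with
      | zero => intro z; simp
      | succ c ih =>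
        intro z
        have : q ^ ((c + 1) * m) = q ^ (c * m) * q ^ m := by rw [← pow_add]; ring_nf
        rw [this, pow_mul, ih z]
        exact K_pow_qm hF hm z
    exact key s
  have hmod : ∀ (z : K) (a : ℕ), z ^ q ^ (s * (m + a)) = z ^ q ^ (s * a) := by
    intro z a
    have h := powpow z m a
    rw [hsm' z] at h
    exact h.symm
  -- the key trace identity
  have hkey : ∀ (a x y : K) (j : ℕ), j ≤ m →
      Algebra.trace F K (a * (x * y ^ q ^ (s * j)))
        = Algebra.trace F K (a ^ q ^ (s * (m - j)) * (x ^ q ^ (s * (m - j)) * y)) := by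
    intro a x y j hj
    obtain ⟨φ, hφ⟩ := exists_frobEquiv (F := F) (K := K) hF (s * (m - j))
    have htr := trace_algEquiv_invariant φ (a * (x * y ^ q ^ (s * j)))
    rw [hφ] at htr
    rw [← htr]
    congr 1
    rw [mul_pow, mul_pow]
    congr 1
    congr 1
    rw [powpow y j (m - j)]
    have : j + (m - j) = m := by omega
    rw [this, hsm' y]
  -- notation
  set Jf := Finset.univ.filter (fun j : Fin (t + 1) => (j : ℕ) ≠ 0) with hJf
  have hjle : ∀ j : Fin (t + 1), (j : ℕ) ≤ m := fun j => by have := j.isLt; omega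
  -- the linearized polynomial
  set P : K → K := fun x => l 0 * x + ∑ j ∈ Jf,
      (l j * x ^ q ^ (s * (j : ℕ))
        + (l j) ^ q ^ (s * (m - (j : ℕ))) * x ^ q ^ (s * (m - (j : ℕ)))) with hP
  have hPzero : ∀ x ∈ W, P x = 0 := by
    intro x hx
    apply (traceForm_nondegenerate F K).1
    intro y
    rw [Algebra.traceForm_apply]
    have hB := hW x hx y
    unfold Bform at hB
    rw [← hB]
    have expand : P x * y = l 0 * (x * y) + ∑ j ∈ Jf,
        (l j * (x ^ q ^ (s * (j : ℕ)) * y)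
          + (l j) ^ q ^ (s * (m - (j : ℕ))) * (x ^ q ^ (s * (m - (j : ℕ))) * y)) := by
      rw [hP]
      simp only [add_mul, Finset.sum_mul]
      congr 1
      · ring
      · exact Finset.sum_congr rfl (fun j _ => by ring)
    rw [expand, map_add, map_add, map_sum, map_sum]
    congr 1
    refine Finset.sum_congr rfl (fun j _ => ?_)
    rw [mul_add, map_add, map_add]
    congr 1
    exact (hkey (l j) x y (j : ℕ) (hjle j)).symm
  -- the coefficients
  set b : ℕ → K := fun k =>
    if k < t then (l ⟨t - k, by omega⟩) ^ q ^ (s * (m + k))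
    else if hk2 : k ≤ 2 * t then (l ⟨k - t, by omega⟩) ^ q ^ (s * t)
    else 0 with hb
  obtain ⟨φt, hφt⟩ := exists_frobEquiv (F := F) (K := K) hF (s * t)
  -- the twisted identity
  have hQ : ∀ x ∈ W, ∑ k ∈ Finset.range (2 * t + 1), b k * x ^ q ^ (s * k) = 0 := by
    intro x hx
    have h2t : 2 * t + 1 = t + (t + 1) := by omega
    rw [h2t, Finset.sum_range_add]
    -- part 2
    have hpart2 : ∑ k ∈ Finset.range (t + 1), b (t + k) * x ^ q ^ (s * (t + k))
        = φt (l 0 * x) + ∑ j ∈ Jf, φt (l j * x ^ q ^ (s * (j : ℕ))) := by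
      rw [Finset.sum_range fun k => b (t + k) * x ^ q ^ (s * (t + k))]
      have hterm : ∀ j : Fin (t + 1), b (t + (j : ℕ)) * x ^ q ^ (s * (t + (j : ℕ)))
          = φt (l j * x ^ q ^ (s * (j : ℕ))) := by
        intro j
        have hbv : b (t + (j : ℕ)) = (l j) ^ q ^ (s * t) := by
          simp only [hb]
          rw [if_neg (by omega), dif_pos (by omega : t + (j : ℕ) ≤ 2 * t)]
          exact congrArg (fun u => u ^ q ^ (s * t)) (congrArg l (Fin.ext (by simp)))
        rw [hbv, map_mul, hφt, hφt, powpow x (j : ℕ) t, Nat.add_comm (j : ℕ) t]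
      rw [Finset.sum_congr rfl (fun j _ => hterm j)]
      -- split off j = 0
      have hsplit := Finset.sum_filter_add_sum_filter_not Finset.univ
        (fun j : Fin (t + 1) => (j : ℕ) ≠ 0) (fun j => φt (l j * x ^ q ^ (s * (j : ℕ))))
      have hnot : Finset.univ.filter (fun j : Fin (t + 1) => ¬ (j : ℕ) ≠ 0) = {0} := by
        ext j
        simp only [Finset.mem_filter, Finset.mem_univ, true_and, not_not, Finset.mem_singleton,
          Fin.ext_iff, Fin.val_zero]
      rw [hnot, Finset.sum_singleton] at hsplit
      rw [← hsplit, ← hJf]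
      have h0 : φt (l 0 * x ^ q ^ (s * (0 : Fin (t+1)) )) = φt (l 0 * x) := by
        norm_num
      rw [h0]
      ring
    -- part 1
    have hpart1 : ∑ k ∈ Finset.range t, b k * x ^ q ^ (s * k)
        = ∑ j ∈ Jf, φt ((l j) ^ q ^ (s * (m - (j : ℕ))) * x ^ q ^ (s * (m - (j : ℕ)))) := by
      refine (Finset.sum_bij' (fun (j : Fin (t+1)) (_ : j ∈ Jf) => t - (j : ℕ))
        (fun (k : ℕ) (hk : k ∈ Finset.range t) => (⟨t - k, by omega⟩ : Fin (t + 1)))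
        ?_ ?_ ?_ ?_ ?_).symm
      · intro j hj
        rw [hJf, Finset.mem_filter] at hj
        have h1 := j.isLt
        have h2 := hj.2
        show t - (j : ℕ) ∈ Finset.range t
        exact Finset.mem_range.mpr (by omega)
      · intro k hk
        have h1 := Finset.mem_range.mp hk
        show (⟨t - k, by omega⟩ : Fin (t + 1)) ∈ Jf
        rw [hJf, Finset.mem_filter]
        exact ⟨Finset.mem_univ _, by simp; omega⟩
      · intro j hj
        rw [hJf, Finset.mem_filter] at hj
        have h1 := j.isLt
        have h2 := hj.2
        exact Fin.ext (by show t - (t - (j : ℕ)) = (j : ℕ); omega)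
      · intro k hk
        have h1 := Finset.mem_range.mp hk
        show t - (t - k) = k
        omega
      · intro j hj
        rw [hJf, Finset.mem_filter] at hj
        have h1 := j.isLt
        have h2 := hj.2
        show φt ((l j) ^ q ^ (s * (m - (j : ℕ))) * x ^ q ^ (s * (m - (j : ℕ))))
          = b (t - (j : ℕ)) * x ^ q ^ (s * (t - (j : ℕ)))
        have hbv : b (t - (j : ℕ)) = (l j) ^ q ^ (s * (m + (t - (j : ℕ)))) := by
          simp only [hb]
          rw [if_pos (by omega : t - (j : ℕ) < t)]
          exact congrArg (fun u => u ^ q ^ (s * (m + (t - (j:ℕ))))) (congrArg l (Fin.ext (by show t - (t - (j : ℕ)) = (j : ℕ); omega)))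
        rw [hbv, map_mul, hφt, hφt, powpow (l j) (m - (j:ℕ)) t, powpow x (m - (j:ℕ)) t]
        have hmjt : m - (j : ℕ) + t = m + (t - (j : ℕ)) := by omega
        rw [hmjt, hmod x (t - (j : ℕ))]
    rw [hpart1, hpart2]
    have hPexp : φt (P x) = φt (l 0 * x)
        + (∑ j ∈ Jf, φt (l j * x ^ q ^ (s * (j : ℕ)))
          + ∑ j ∈ Jf, φt ((l j) ^ q ^ (s * (m - (j : ℕ))) * x ^ q ^ (s * (m - (j : ℕ))))) := by
      rw [hP]
      simp only [map_add, map_sum]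
      rw [Finset.sum_add_distrib]
    have hfin : ∑ j ∈ Jf, φt ((l j) ^ q ^ (s * (m - (j : ℕ))) * x ^ q ^ (s * (m - (j : ℕ))))
        + (φt (l 0 * x) + ∑ j ∈ Jf, φt (l j * x ^ q ^ (s * (j : ℕ)))) = φt (P x) := by
      rw [hPexp]; ring
    rw [hfin, hPzero x hx, map_zero]
    -- b is not the zero combination (Dedekind independence of characters)
  obtain ⟨j0, hj0⟩ : ∃ j, l j ≠ 0 := Function.ne_iff.mp hl
  have hbj0 : b (t + (j0 : ℕ)) ≠ 0 := by
    have hbv : b (t + (j0 : ℕ)) = (l j0) ^ q ^ (s * t) := by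
      simp only [hb]
      rw [if_neg (by omega), dif_pos (by omega : t + (j0 : ℕ) ≤ 2 * t)]
      exact congrArg (fun u => u ^ q ^ (s * t)) (congrArg l (Fin.ext (by simp)))
    rw [hbv]
    exact pow_ne_zero _ hj0
  have hbnz : ∃ z : K, ∑ k ∈ Finset.range (2 * t + 1), b k * z ^ q ^ (s * k) ≠ 0 := by
    by_contra H
    push_neg at H
    -- monoid homomorphisms z ↦ z ^ q ^ (s k)
    set μ : Fin (2 * t + 1) → (K →* K) := fun k =>
      { toFun := fun z => z ^ q ^ (s * (k : ℕ))
        map_one' := one_pow _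
        map_mul' := fun a b => mul_pow a b _ } with hμ
    have main : ∀ k1 k2 : Fin (2 * t + 1), (k1 : ℕ) < (k2 : ℕ) →
        (∀ z : K, z ^ q ^ (s * (k1 : ℕ)) = z ^ q ^ (s * (k2 : ℕ))) → False := by
      intro k1 k2 hlt hz
      have hfixall : ∀ z : K, z ^ q ^ (s * ((k2 : ℕ) - (k1 : ℕ))) = z := by
        intro z
        apply pow_qe_injective (F := F) (K := K) hF (s * (k1 : ℕ))
        show (z ^ q ^ (s * ((k2:ℕ) - (k1:ℕ)))) ^ q ^ (s * (k1:ℕ)) = z ^ q ^ (s * (k1:ℕ))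
        rw [powpow z ((k2:ℕ) - (k1:ℕ)) (k1:ℕ)]
        have : (k2:ℕ) - (k1:ℕ) + (k1:ℕ) = (k2:ℕ) := by omega
        rw [this]
        exact (hz z).symm
      have hdvd := m_dvd_of_pow_fix (F := F) hF hm hm0 (s * ((k2:ℕ) - (k1:ℕ))) hfixall
      have hco : Nat.Coprime m s := Nat.coprime_comm.mp hsm
      have hdvd2 : m ∣ ((k2:ℕ) - (k1:ℕ)) := hco.dvd_of_dvd_mul_left hdvd
      have hk2lt := k2.isLt
      have := Nat.le_of_dvd (by omega) hdvd2
      omega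
    have hμinj : Function.Injective μ := by
      intro k k' hkk
      have heq : ∀ z : K, z ^ q ^ (s * (k : ℕ)) = z ^ q ^ (s * (k' : ℕ)) := by
        intro z
        exact DFunLike.congr_fun hkk z
      by_contra hne
      rcases Nat.lt_or_ge (k : ℕ) (k' : ℕ) with h | h
      · exact main k k' h heq
      · rcases Nat.lt_or_ge (k' : ℕ) (k : ℕ) with h' | h'
        · exact main k' k h' (fun z => (heq z).symm)
        · exact hne (Fin.ext (by omega))
    have li := (linearIndependent_monoidHom K K).comp μ hμinj
    have hcomb : ∑ k : Fin (2 * t + 1), b (k : ℕ) • (⇑(μ k) : K → K) = (0 : K → K) := by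
      funext z
      simp only [Finset.sum_apply, Pi.smul_apply, smul_eq_mul, Pi.zero_apply, hμ,
        MonoidHom.coe_mk, OneHom.coe_mk]
      rw [← Finset.sum_range (fun k => b k * z ^ q ^ (s * k))]
      exact H z
    have hall := Fintype.linearIndependent_iff.mp li (fun k => b (k : ℕ)) hcomb
    exact hbj0 (hall ⟨t + (j0 : ℕ), by omega⟩)
  -- apply the kernel bound
  obtain ⟨σE, hσE⟩ := exists_frobEquiv (F := F) (K := K) hF s
  set σh : K →ₐ[F] K := σE.toAlgHom with hσh
  have hσhapp : ∀ z : K, σh z = z ^ q ^ s := fun z => hσE z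
  have hiter : ∀ (k : ℕ) (z : K), (⇑σh)^[k] z = z ^ q ^ (s * k) := by
    intro k
    induction k with
    | zero => intro z; simp
    | succ k ih =>
      intro z
      rw [Function.iterate_succ_apply', ih, hσhapp]
      have h1 : (z ^ q ^ (s * k)) ^ q ^ (s * 1) = z ^ q ^ (s * (k + 1)) := powpow z k 1
      rw [mul_one] at h1
      exact h1
  refine ker_bound σh ?_ (2 * t) b ?_ W ?_
  · intro x hxfix
    rw [hσhapp] at hxfix
    exact fixed_in_base hF hm hsm x hxfix
  · obtain ⟨z, hz⟩ := hbnz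
    refine ⟨z, fun h => hz ?_⟩
    rw [← h]
    exact Finset.sum_congr rfl (fun k _ => by rw [hiter k z])
  · intro x hx
    have := hQ x hx
    rw [← this]
    exact Finset.sum_congr rfl (fun k _ => by rw [hiter k x])
end

section
/- Let q be an odd prime power, m, s, t as above with gcd(s,m)=1 and 0 ≤ t ≤ (m-1)/2. The map λ ↦ B_λ from F_{q^m}^{t+1} to symmetric bilinear forms on F_{q^m} over F_q is injective; consequently the set Y_s(t,m,q) = {B_λ : λ ∈ F_{q^m}^{t+1}} has exactly q^{m(t+1)} elements. -/
set_option linter.unusedSectionVars false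

section
variable (F K : Type*) [Field F] [Field K] [Fintype F] [Fintype K] [Algebra F K]

lemma trace_algEquiv_inv (σ : K ≃ₐ[F] K) (x : K) :
    Algebra.trace F K (σ x) = Algebra.trace F K x := by
  have hinj : Function.Injective (algebraMap F K) := (algebraMap F K).injective
  apply hinj
  rw [trace_eq_sum_automorphisms, trace_eq_sum_automorphisms]
  exact Fintype.sum_bijective (· * σ) (Group.mulRight_bijective σ) _ _ (fun τ => rfl)

lemma trace_pow_card_pow (c : ℕ) (x : K) :
    Algebra.trace F K (x ^ (Fintype.card F) ^ c) = Algebra.trace F K x := by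
  obtain ⟨p, hc⟩ := CharP.exists F
  haveI : CharP F p := hc
  haveI hp : Fact p.Prime := ⟨CharP.char_is_prime F p⟩
  haveI : CharP K p := charP_of_injective_algebraMap (algebraMap F K).injective p
  obtain ⟨k, hpp, hcard⟩ := FiniteField.card F p
  have hq : (Fintype.card F) ^ c = p ^ ((k : ℕ) * c) := by rw [hcard, ← pow_mul]
  let ψ : K →ₐ[F] K :=
    { toRingHom := iterateFrobenius K p ((k : ℕ) * c)
      commutes' := fun a => by
        show iterateFrobenius K p ((k:ℕ)*c) _ = _
        rw [iterateFrobenius_def, pow_mul]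
        rw [← map_pow, ← hcard, FiniteField.pow_card_pow] }
  have hbij : Function.Bijective ψ := Finite.injective_iff_bijective.mp ψ.toRingHom.injective
  have := trace_algEquiv_inv F K (AlgEquiv.ofBijective ψ hbij) x
  simpa [AlgEquiv.ofBijective, ψ, iterateFrobenius_def, ← hq] using this

end

section
variable {K : Type*} [Field K] [Fintype K]

lemma dedekind_frob (q m : ℕ) [NeZero m] (hq : 3 ≤ q) (hcard : Fintype.card K = q ^ m)
    (c : ZMod m → K) (h : ∀ x : K, ∑ a : ZMod m, c a * x ^ q ^ (ZMod.val a) = 0) :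
    ∀ a, c a = 0 := by
  have hm : 0 < m := Nat.pos_of_ne_zero (NeZero.ne m)
  have key : ∀ e f : ℕ, e < m → f < m → (∀ x : K, x ^ q ^ e = x ^ q ^ f) → e = f := by
    intro e f he hf hx
    obtain ⟨g, hg⟩ := IsCyclic.exists_generator (α := Kˣ)
    classical
    have horder : orderOf g = q ^ m - 1 := by
      rw [orderOf_eq_card_of_forall_mem_zpowers hg, Nat.card_units, Nat.card_eq_fintype_card, hcard]
    have hgpow : g ^ q ^ e = g ^ q ^ f := by
      ext
      push_cast
      exact hx g
    have hlt : ∀ i : ℕ, i < m → q ^ i < q ^ m - 1 := by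
      intro i hi
      have h1 : q ^ i ≤ q ^ (m - 1) := Nat.pow_le_pow_right (by omega) (by omega)
      have h2 : q ^ (m - 1) * 3 ≤ q ^ (m - 1) * q := Nat.mul_le_mul_left _ hq
      have h3 : q ^ (m - 1) * q = q ^ m := by
        rw [← pow_succ]; congr 1; omega
      have h4 : 1 ≤ q ^ (m - 1) := Nat.one_le_pow _ _ (by omega)
      omega
    have := pow_inj_mod.mp hgpow
    rw [horder, Nat.mod_eq_of_lt (hlt e he), Nat.mod_eq_of_lt (hlt f hf)] at this
    exact Nat.pow_right_injective (by omega) this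
  set φ : ZMod m → (K →* K) := fun a => powMonoidHom (q ^ (ZMod.val a)) with hφ
  have hφinj : Function.Injective φ := by
    intro a b hab
    have : ∀ x : K, x ^ q ^ (ZMod.val a) = x ^ q ^ (ZMod.val b) := fun x =>
      congrArg (fun ψ : K →* K => ψ x) hab
    have := key _ _ (ZMod.val_lt a) (ZMod.val_lt b) this
    exact ZMod.val_injective m this
  have li := (linearIndependent_monoidHom K K).comp φ hφinj
  rw [Fintype.linearIndependent_iff] at li
  apply li c
  funext x
  simpa [Finset.sum_apply, powMonoidHom, φ] using h x

end

section
variable {F K : Type*} [Field F] [Field K] [Fintype F] [Fintype K] [Algebra F K]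

lemma pow_q_mod (q m : ℕ) (hcard : Fintype.card K = q ^ m) (n : ℕ) (x : K) :
    x ^ q ^ n = x ^ q ^ (n % m) := by
  conv_lhs => rw [← Nat.mod_add_div n m]
  rw [pow_add, pow_mul, pow_mul, ← hcard, FiniteField.pow_card_pow]

lemma trace_shift (q m : ℕ) (hF : Fintype.card F = q) (hcard : Fintype.card K = q ^ m)
    (hm : 0 < m) (c : ℕ) (u y : K) :
    Algebra.trace F K (u ^ q ^ (c * (m - 1)) * y) = Algebra.trace F K (u * y ^ q ^ c) := by
  have h1 := trace_pow_card_pow F K c (u ^ q ^ (c * (m - 1)) * y)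
  rw [hF] at h1
  rw [← h1, mul_pow, ← pow_mul, ← pow_add]
  have h2 : c * (m - 1) + c = c * m := by cases m with | zero => omega | succ n => simp [Nat.succ_sub_one]; ring
  rw [h2, pow_q_mod q m hcard (c * m), Nat.mul_mod_left, pow_zero, pow_one]

end

section
variable {F K : Type*} [Field F] [Field K] [Fintype F] [Fintype K] [Algebra F K]

lemma Bform_eq_zero_imp (q m s t : ℕ)
    (hF : Fintype.card F = q) (hodd : Odd q)
    (hm : Module.finrank F K = m) (hs : 0 < s) (hsm : Nat.gcd s m = 1)
    (ht : 2 * t + 1 ≤ m) (l : Fin (t + 1) → K)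
    (h : ∀ x y : K, Bform F K q s t l x y = 0) : l = 0 := by
  classical
  have hm1 : 0 < m := by omega
  haveI : NeZero m := ⟨hm1.ne'⟩
  have hq2 : 2 ≤ q := hF ▸ Fintype.one_lt_card
  have hq3 : 3 ≤ q := by
    rcases hodd with ⟨r, hr⟩; omega
  have hcardK : Fintype.card K = q ^ m := by
    rw [← hF, ← hm]; exact Module.card_eq_pow_finrank
  set S := Finset.univ.filter (fun j : Fin (t + 1) => (j : ℕ) ≠ 0) with hS
  -- the linearized polynomial map
  set L : K → K := fun x => l 0 * x +
      ∑ j ∈ S, (l j * x ^ q ^ (s * (j : ℕ)) + (l j * x) ^ q ^ (s * (j : ℕ) * (m - 1)))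
    with hL
  -- Step 1 : Tr (L x * y) = 0
  have key : ∀ x y : K, Algebra.trace F K (L x * y) = 0 := by
    intro x y
    rw [← h x y, Bform, hL]
    simp only [add_mul, Finset.sum_mul, map_add, map_sum, mul_add]
    congr 1
    · congr 1; ring
    · apply Finset.sum_congr rfl
      intro j hj
      congr 1
      · congr 1; ring
      · rw [trace_shift q m hF hcardK hm1 (s * (j : ℕ)) (l j * x) y]
        congr 1; ring
  -- Step 2 : L x = 0 for all x
  have hL0 : ∀ x : K, L x = 0 := by
    intro x
    apply (traceForm_nondegenerate F K).1
    intro y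
    rw [Algebra.traceForm_apply]
    exact key x y
  -- Step 3 : coefficients
  set c : ZMod m → K := fun a =>
      (if (0 : ZMod m) = a then l 0 else 0) +
        ∑ j ∈ S, ((if ((s * (j : ℕ) : ℕ) : ZMod m) = a then l j else 0) +
          (if ((s * (j : ℕ) * (m - 1) : ℕ) : ZMod m) = a
            then l j ^ q ^ (s * (j : ℕ) * (m - 1)) else 0))
    with hc
  have hsum : ∀ x : K, ∑ a : ZMod m, c a * x ^ q ^ (ZMod.val a) = L x := by
    intro x
    rw [hc, hL]
    simp only [add_mul, Finset.sum_mul, ite_mul, zero_mul, Finset.sum_add_distrib]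
    congr 1
    · rw [Finset.sum_ite_eq Finset.univ (0 : ZMod m) (fun a => l 0 * x ^ q ^ (ZMod.val a))]
      simp
    congr 1
    · rw [Finset.sum_comm]
      apply Finset.sum_congr rfl
      intro j hj
      rw [Finset.sum_ite_eq Finset.univ ((s * (j : ℕ) : ℕ) : ZMod m)
        (fun a => l j * x ^ q ^ (ZMod.val a)), if_pos (Finset.mem_univ _),
        ZMod.val_natCast, ← pow_q_mod q m hcardK]
    · rw [Finset.sum_comm]
      apply Finset.sum_congr rfl
      intro j hj
      rw [Finset.sum_ite_eq Finset.univ ((s * (j : ℕ) * (m - 1) : ℕ) : ZMod m)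
        (fun a => l j ^ q ^ (s * (j : ℕ) * (m - 1)) * x ^ q ^ (ZMod.val a)),
        if_pos (Finset.mem_univ _), ZMod.val_natCast, ← pow_q_mod q m hcardK, mul_pow]
  have hc0 : ∀ a, c a = 0 :=
    dedekind_frob q m hq3 hcardK c (fun x => by rw [hsum x, hL0 x])
  -- Step 4 : distinctness and extraction
  have hsu : IsUnit ((s : ℕ) : ZMod m) := (ZMod.unitOfCoprime s hsm).isUnit
  have hjne : ∀ j : Fin (t + 1), j ∈ S → (((j : ℕ) : ZMod m)) ≠ 0 := by
    intro j hj
    rw [hS, Finset.mem_filter] at hj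
    rw [Ne, ZMod.natCast_eq_zero_iff]
    intro hdvd
    have hjlt : (j : ℕ) < m := by have := j.isLt; omega
    have := Nat.le_of_dvd (Nat.pos_of_ne_zero hj.2) hdvd
    omega
  have hcast1 : ∀ j : Fin (t + 1), ((s * (j : ℕ) : ℕ) : ZMod m)
      = (s : ZMod m) * ((j : ℕ) : ZMod m) := by intro j; push_cast; ring
  have hm1cast : (((m - 1 : ℕ)) : ZMod m) = -1 := by
    have h2 : ((m - 1 + 1 : ℕ) : ZMod m) = 0 := by
      rw [show m - 1 + 1 = m from by omega, ZMod.natCast_self]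
    push_cast at h2
    linear_combination h2
  have hcast2 : ∀ j : Fin (t + 1), ((s * (j : ℕ) * (m - 1) : ℕ) : ZMod m)
      = -((s : ZMod m) * ((j : ℕ) : ZMod m)) := by
    intro j
    push_cast [hm1cast]
    ring
  have hne1 : ∀ j : Fin (t + 1), j ∈ S → ((s * (j : ℕ) : ℕ) : ZMod m) ≠ 0 := by
    intro j hj h0
    rw [hcast1] at h0
    exact hjne j hj (hsu.mul_right_eq_zero.mp h0)
  have hinjS : ∀ j k : Fin (t + 1), j ∈ S → k ∈ S →
      ((s * (j : ℕ) : ℕ) : ZMod m) = ((s * (k : ℕ) : ℕ) : ZMod m) → j = k := by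
    intro j k hjmem hkmem hjk
    rw [hcast1, hcast1] at hjk
    have := hsu.mul_left_cancel hjk
    have hj' : (j : ℕ) % m = (k : ℕ) % m := by
      have := congrArg ZMod.val this
      rwa [ZMod.val_natCast, ZMod.val_natCast] at this
    have hjlt : (j : ℕ) < m := by have := j.isLt; omega
    have hklt : (k : ℕ) < m := by have := k.isLt; omega
    rw [Nat.mod_eq_of_lt hjlt, Nat.mod_eq_of_lt hklt] at hj'
    exact Fin.ext hj'
  have hmix : ∀ j k : Fin (t + 1), j ∈ S → k ∈ S →
      ((s * (j : ℕ) * (m - 1) : ℕ) : ZMod m) ≠ ((s * (k : ℕ) : ℕ) : ZMod m) := by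
    intro j k hjmem hkmem heq
    rw [hcast2, hcast1] at heq
    have h0 : (s : ZMod m) * (((j : ℕ) : ZMod m) + ((k : ℕ) : ZMod m)) = 0 := by
      linear_combination -heq
    have h1 : ((j : ℕ) : ZMod m) + ((k : ℕ) : ZMod m) = 0 :=
      hsu.mul_right_eq_zero.mp h0
    rw [← Nat.cast_add, ZMod.natCast_eq_zero_iff] at h1
    rw [hS, Finset.mem_filter] at hjmem hkmem
    have hjle : (j : ℕ) ≤ t := by have := j.isLt; omega
    have hkle : (k : ℕ) ≤ t := by have := k.isLt; omega
    have hpos : 0 < (j : ℕ) + (k : ℕ) := by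
      have := hjmem.2; omega
    have := Nat.le_of_dvd hpos h1
    omega
  -- l 0 = 0
  have hl0 : l 0 = 0 := by
    have h00 := hc0 0
    simp only [hc] at h00
    rw [if_true, Finset.sum_eq_zero, add_zero] at h00
    · exact h00
    · intro j hj
      rw [if_neg (hne1 j hj), if_neg, add_zero]
      rw [hcast2]
      exact fun h0 => hjne j hj (hsu.mul_right_eq_zero.mp (neg_eq_zero.mp h0))
  -- l j = 0 for j ∈ S
  have hlj : ∀ j : Fin (t + 1), j ∈ S → l j = 0 := by
    intro j hj
    have hcj := hc0 ((s * (j : ℕ) : ℕ) : ZMod m)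
    simp only [hc] at hcj
    rw [if_neg (fun h' => hne1 j hj h'.symm), zero_add,
      Finset.sum_eq_single j] at hcj
    · rw [if_pos rfl, if_neg (hmix j j hj hj), add_zero] at hcj
      exact hcj
    · intro k hk hkj
      rw [if_neg, if_neg (hmix k j hk hj), add_zero]
      exact fun h' => hkj (hinjS k j hk hj h')
    · intro hcon; exact absurd hj hcon
  funext j
  by_cases hj0 : (j : ℕ) = 0
  · have : j = 0 := Fin.ext hj0
    rw [this]; exact hl0
  · exact hlj j (by rw [hS, Finset.mem_filter]; exact ⟨Finset.mem_univ _, hj0⟩)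

end

/-- Let `q` be an odd prime power, `gcd(s,m) = 1`, `0 ≤ t ≤ (m-1)/2`.
The map `λ ↦ B_λ` from `F_{q^m}^{t+1}` to symmetric bilinear forms on `F_{q^m}` over `F_q`
is injective; consequently `Y_s(t,m,q) = {B_λ : λ}` has exactly `q^{m(t+1)}` elements. -/
theorem Bform_injective_card (q m s t : ℕ)
    (F K : Type*) [Field F] [Field K] [Fintype F] [Fintype K] [Algebra F K]
    (hF : Fintype.card F = q) (hodd : Odd q)
    (hm : Module.finrank F K = m) (hs : 0 < s) (hsm : Nat.gcd s m = 1)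
    (ht : 2 * t + 1 ≤ m) :
    Function.Injective (fun l : Fin (t + 1) → K => Bform F K q s t l) ∧
      Set.ncard (Set.range (fun l : Fin (t + 1) → K => Bform F K q s t l))
        = q ^ (m * (t + 1)) := by
  classical
  have hinj : Function.Injective (fun l : Fin (t + 1) → K => Bform F K q s t l) := by
    intro l₁ l₂ hl
    have hdiff : ∀ x y : K, Bform F K q s t (l₁ - l₂) x y = 0 := by
      intro x y
      have h12 : Bform F K q s t l₁ x y = Bform F K q s t l₂ x y := by
        have := congrFun (congrFun hl x) y
        simpa using this
      simp only [Bform, Pi.sub_apply, sub_mul, Finset.sum_sub_distrib] at h12 ⊢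
      rw [sub_add_sub_comm, map_sub, h12, sub_self]
    have := Bform_eq_zero_imp q m s t hF hodd hm hs hsm ht (l₁ - l₂) hdiff
    exact sub_eq_zero.mp this
  refine ⟨hinj, ?_⟩
  have hcardK : Fintype.card K = q ^ m := by
    rw [← hF, ← hm]; exact Module.card_eq_pow_finrank
  rw [← Set.image_univ, Set.ncard_image_of_injective _ hinj, Set.ncard_univ,
    Nat.card_eq_fintype_card, Fintype.card_fun, Fintype.card_fin, hcardK, ← pow_mul]
end

section
/- Let q be an odd prime power and let Q: V → F_q be a quadratic form of odd rank i ≥ 1 on an m-dimensional F_q-vector space V. Then the number of x ∈ V \ {0} with Q(x) ≠ 0 (the Hamming weight of the codeword associated to Q) equals q^{m-1}(q-1). -/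
open Finset

private lemma addChar_map_sum {A M : Type*} [AddCommMonoid A] [CommMonoid M]
    (ψ : AddChar A M) {ι : Type*} (s : Finset ι) (f : ι → A) :
    ψ (∑ i ∈ s, f i) = ∏ i ∈ s, ψ (f i) := by
  induction s using Finset.cons_induction with
  | empty => simp
  | cons a s ha ih => rw [Finset.sum_cons, Finset.prod_cons, ψ.map_add_eq_mul, ih]

private lemma sum_psi_mul_sq {F : Type*} [Field F] [Fintype F] [DecidableEq F]
    {R' : Type*} [Field R'] (hF : ringChar F ≠ 2)
    {ψ : AddChar F R'} (hψ : ψ.IsPrimitive) {a : F} (ha : a ≠ 0) :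
    ∑ x : F, ψ (a * (x * x)) =
      ((quadraticChar F).ringHomComp (Int.castRingHom R')) a *
        gaussSum ((quadraticChar F).ringHomComp (Int.castRingHom R')) ψ := by
  set η := (quadraticChar F).ringHomComp (Int.castRingHom R') with hη
  have key : ∀ u : F, ((univ.filter (fun x : F => x * x = u)).card : R') = η u + 1 := by
    intro u
    have h1 : ((univ.filter (fun x : F => x * x = u)).card : ℤ) = quadraticChar F u + 1 := by
      rw [← quadraticChar_card_sqrts hF u]
      norm_cast
      congr 1
      ext x
      simp [sq]
    have : (((univ.filter (fun x : F => x * x = u)).card : ℤ) : R') = ((quadraticChar F u + 1 : ℤ) : R') := by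
      rw [h1]
    push_cast at this
    rw [this]
    simp [hη, MulChar.ringHomComp_apply]
  calc ∑ x : F, ψ (a * (x * x))
      = ∑ u : F, ∑ x ∈ univ.filter (fun x : F => x * x = u), ψ (a * (x * x)) :=
        (Finset.sum_fiberwise univ (fun x => x * x) (fun x => ψ (a * (x * x)))).symm
    _ = ∑ u : F, ((univ.filter (fun x : F => x * x = u)).card : R') * ψ (a * u) := by
        refine sum_congr rfl fun u _ => ?_
        rw [Finset.sum_congr rfl (fun x hx => by rw [(mem_filter.mp hx).2]), sum_const,
          nsmul_eq_mul]
    _ = ∑ u : F, (η u * ψ (a * u) + ψ (a * u)) := by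
        refine sum_congr rfl fun u _ => ?_
        rw [key u, add_mul, one_mul]
    _ = gaussSum η (ψ.mulShift a) + ∑ u : F, ψ (u * a) := by
        rw [sum_add_distrib, gaussSum]
        congr 1
        exact sum_congr rfl fun u _ => by rw [mul_comm]
    _ = gaussSum η (ψ.mulShift a) := by
        rw [AddChar.sum_mulShift a hψ]
        simp [ha]
    _ = η a * gaussSum η ψ := by
        have hsq : η a * η a = 1 := by
          rw [← map_mul]
          have : quadraticChar F (a * a) = 1 := by
            rw [← sq]; exact quadraticChar_sq_one' ha
          rw [hη, MulChar.ringHomComp_apply, this]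
          norm_num
        have hms := gaussSum_mulShift η ψ (Units.mk0 a ha)
        simp only [Units.val_mk0] at hms
        calc gaussSum η (ψ.mulShift a) = (η a * η a) * gaussSum η (ψ.mulShift a) := by
              rw [hsq, one_mul]
          _ = η a * gaussSum η ψ := by rw [mul_assoc, hms]

private lemma diag_count {F : Type*} [Field F] [Fintype F] [DecidableEq F]
    (hF : ringChar F ≠ 2) (n : ℕ) (w : Fin n → F)
    (hodd : Odd (univ.filter fun j => w j ≠ 0).card) :
    (univ.filter fun x : Fin n → F => ∑ j, w j * (x j * x j) = 0).card
      = Fintype.card F ^ (n - 1) := by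
  classical
  set q := Fintype.card F with hqdef
  have hq2 : 2 ≤ q := Fintype.one_lt_card
  set i := (univ.filter fun j => w j ≠ 0).card with hidef
  have hi1 : 1 ≤ i := hodd.pos
  have hn1 : 1 ≤ n := le_trans hi1 (le_trans (card_filter_le _ _) (by simp))
  have hchar : ringChar ℂ ≠ ringChar F := by
    rw [ringChar.eq_zero]
    exact fun h => (CharP.char_is_prime F (ringChar F)).pos.ne h
  obtain ⟨nn, ψ, hψ⟩ := AddChar.FiniteField.primitiveChar F ℂ hchar
  set R' := CyclotomicField nn ℂ with hR'
  set η := (quadraticChar F).ringHomComp (Int.castRingHom R') with hη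
  set G := gaussSum η ψ with hG
  set N := (univ.filter fun x : Fin n → F => ∑ j, w j * (x j * x j) = 0).card with hN
  have hsq1 : ∀ t : F, t ≠ 0 → η t * η t = 1 := by
    intro t ht
    rw [← map_mul]
    have h1 : quadraticChar F (t * t) = 1 := by rw [← sq]; exact quadraticChar_sq_one' ht
    rw [hη, MulChar.ringHomComp_apply, h1]
    norm_num
  have hfactor : ∀ t : F, ∑ x : Fin n → F, ψ (t * ∑ j, w j * (x j * x j))
      = ∏ j, ∑ s : F, ψ (t * (w j * (s * s))) := by
    intro t
    rw [Fintype.prod_sum]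
    exact sum_congr rfl fun x _ => by rw [mul_sum, addChar_map_sum]
  have hSt : ∀ t : F, t ≠ 0 → ∑ x : Fin n → F, ψ (t * ∑ j, w j * (x j * x j))
      = η t * ((∏ j ∈ univ.filter fun j => w j ≠ 0, (η (w j) * G))
          * (q : R') ^ (univ.filter fun j => ¬ w j ≠ 0).card) := by
    intro t ht
    rw [hfactor, ← prod_filter_mul_prod_filter_not univ (fun j => w j ≠ 0)]
    have h1 : ∀ j ∈ univ.filter fun j => w j ≠ 0,
        ∑ s : F, ψ (t * (w j * (s * s))) = η t * (η (w j) * G) := by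
      intro j hj
      have hwj : w j ≠ 0 := (mem_filter.mp hj).2
      have hkey := sum_psi_mul_sq (R' := R') hF hψ (mul_ne_zero ht hwj)
      calc ∑ s : F, ψ (t * (w j * (s * s)))
          = ∑ s : F, ψ ((t * w j) * (s * s)) :=
            sum_congr rfl fun s _ => by rw [mul_assoc]
        _ = η (t * w j) * G := hkey
        _ = η t * (η (w j) * G) := by rw [map_mul, mul_assoc]
    have h2 : ∀ j ∈ univ.filter fun j => ¬ w j ≠ 0,
        ∑ s : F, ψ (t * (w j * (s * s))) = (q : R') := by
      intro j hj
      have hwj : w j = 0 := not_not.mp (mem_filter.mp hj).2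
      simp [hwj, hqdef]
    rw [prod_congr rfl h1, prod_congr rfl h2, prod_const, prod_mul_distrib, prod_const]
    have hpow : η t ^ i = η t := by
      obtain ⟨k, hk⟩ := hodd
      rw [show i = 2 * k + 1 from hk, pow_succ, pow_mul, sq, hsq1 t ht, one_pow, one_mul]
    rw [hpow, mul_assoc]
  have master : (N : R') * (q : R') = (q : R') ^ n := by
    have lhs : ∑ x : Fin n → F, ∑ t : F, ψ (t * ∑ j, w j * (x j * x j))
        = (N : R') * (q : R') := by
      have step : ∀ x : Fin n → F, ∑ t : F, ψ (t * ∑ j, w j * (x j * x j))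
          = ((if (∑ j, w j * (x j * x j)) = 0 then q else 0 : ℕ) : R') := by
        intro x
        have := AddChar.sum_mulShift (∑ j, w j * (x j * x j)) hψ
        rw [this]
      rw [sum_congr rfl fun x _ => step x, ← Nat.cast_sum]
      have hnat : ∑ x : Fin n → F, (if (∑ j, w j * (x j * x j)) = 0 then q else 0) = N * q := by
        rw [← Finset.sum_filter, sum_const, smul_eq_mul, hN]
      rw [hnat, Nat.cast_mul]
    have rhs : ∑ t : F, ∑ x : Fin n → F, ψ (t * ∑ j, w j * (x j * x j)) = (q : R') ^ n := by
      rw [← Finset.add_sum_erase univ _ (mem_univ (0 : F))]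
      have h0 : ∑ x : Fin n → F, ψ ((0 : F) * ∑ j, w j * (x j * x j)) = (q : R') ^ n := by
        have hcardfun : Fintype.card (Fin n → F) = q ^ n := by simp [hqdef]
        simp only [zero_mul, AddChar.map_zero_eq_one, sum_const, card_univ, nsmul_eq_mul, mul_one,
          hcardfun]
        push_cast
        ring
      have hrest : ∑ t ∈ univ.erase 0, ∑ x : Fin n → F, ψ (t * ∑ j, w j * (x j * x j)) = 0 := by
        rw [sum_congr rfl fun t ht => hSt t (mem_erase.mp ht).1, ← sum_mul]
        have hz : ∑ t ∈ univ.erase 0, η t = 0 := by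
          rw [Finset.sum_erase_eq_sub (mem_univ (0 : F))]
          have htot : ∑ t : F, η t = 0 := by
            have h := quadraticChar_sum_zero hF
            have : ∑ t : F, η t = (((∑ t : F, quadraticChar F t : ℤ)) : R') := by
              rw [Int.cast_sum]
              exact sum_congr rfl fun t _ => by rw [hη, MulChar.ringHomComp_apply]; rfl
            rw [this, h, Int.cast_zero]
          rw [htot, MulChar.map_nonunit _ (by simp : ¬ IsUnit (0 : F)), sub_zero]
        rw [hz, zero_mul]
      rw [hrest, add_zero, h0]
    rw [← lhs, Finset.sum_comm, rhs]
  have hqne : (q : R') ≠ 0 := Nat.cast_ne_zero.mpr (Nat.one_le_iff_ne_zero.mp (le_trans one_le_two hq2))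
  have hfin : (N : R') = ((q ^ (n - 1) : ℕ) : R') := by
    push_cast
    refine mul_right_cancel₀ hqne ?_
    rw [master, ← pow_succ]
    congr 1
    exact (Nat.sub_add_cancel hn1).symm
  exact_mod_cast hfin

private lemma diag_radical {F : Type*} [Field F] (h2 : (2 : F) ≠ 0) {n : ℕ}
    (w : Fin n → F) (u : Fin n → F) :
    (∀ v : Fin n → F, (∑ j, w j * ((u j + v j) * (u j + v j)))
        = (∑ j, w j * (u j * u j)) + ∑ j, w j * (v j * v j)) ↔ ∀ j, w j * u j = 0 := by
  classical
  have hexp : ∀ v : Fin n → F, ∑ j, w j * ((u j + v j) * (u j + v j))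
      = ((∑ j, w j * (u j * u j)) + ∑ j, w j * (v j * v j)) + 2 * ∑ j, (w j * u j) * v j := by
    intro v
    rw [Finset.mul_sum, add_assoc, ← Finset.sum_add_distrib, ← Finset.sum_add_distrib]
    exact Finset.sum_congr rfl fun j _ => by ring
  constructor
  · intro h j
    have h1 := h (Pi.single j 1)
    rw [hexp] at h1
    have h3 : 2 * ∑ j', (w j' * u j') * ((Pi.single j (1 : F) : Fin n → F) j') = 0 := by
      have := add_eq_left.mp h1
      exact this
    have h4 : ∑ j', (w j' * u j') * ((Pi.single j (1 : F) : Fin n → F) j') = w j * u j := by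
      rw [Finset.sum_congr rfl fun j' _ => by
        rw [Pi.single_apply, mul_ite, mul_one, mul_zero]]
      rw [Finset.sum_ite_eq' univ j fun j' => w j' * u j']
      simp
    rw [h4] at h3
    exact (mul_eq_zero.mp h3).resolve_left h2
  · intro h v
    rw [hexp]
    have : ∑ j, (w j * u j) * v j = 0 := Finset.sum_eq_zero fun j _ => by rw [h j, zero_mul]
    rw [this, mul_zero, add_zero]



/-- Let `q` be an odd prime power and `Q : V → F_q` a quadratic form of
odd rank `i ≥ 1` on an `m`-dimensional `F_q`-vector space `V`, where the rank of `Q` is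
`m` minus the dimension of the radical of the associated symmetric bilinear form
`B(x,y) = (Q(x+y) - Q(x) - Q(y))/2` (the radical being
`W = {x : ∀ y, Q(x+y) = Q(x) + Q(y)}`). Then the number of `x ∈ V \ {0}` with
`Q(x) ≠ 0` equals `q^{m-1}(q-1)`. -/
theorem weight_of_odd_rank_quadratic_form (q m i : ℕ) (F : Type*) [Field F] [Fintype F]
    (hq : Fintype.card F = q) (hodd : Odd q)
    (V : Type*) [AddCommGroup V] [Module F V]
    (hV : Module.finrank F V = m)
    (Q : QuadraticForm F V)
    (W : Submodule F V)
    (hW : ∀ x : V, x ∈ W ↔ ∀ y : V, Q (x + y) = Q x + Q y)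
    (hrank : m - Module.finrank F W = i)
    (hi1 : 1 ≤ i) (hiodd : Odd i) :
    Set.ncard {x : V | x ≠ 0 ∧ Q x ≠ 0} = q ^ (m - 1) * (q - 1) := by
  classical
  have hcardodd : Odd (Fintype.card F) := hq ▸ hodd
  have hF2 : ringChar F ≠ 2 := by
    intro h
    haveI hchp : CharP F 2 := h ▸ ringChar.charP F
    obtain ⟨nn, hp, hc⟩ := FiniteField.card F 2
    rw [hc] at hcardodd
    have heven : Even ((2 : ℕ) ^ (nn : ℕ)) :=
      (Nat.even_pow).mpr ⟨even_two, nn.pos.ne'⟩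
    exact (Nat.not_odd_iff_even.mpr heven) hcardodd
  have h2F : (2 : F) ≠ 0 := Ring.two_ne_zero hF2
  haveI : Invertible (2 : F) := invertibleOfRingCharNotDvd (by
    intro hdvd
    rcases (Nat.prime_two.eq_one_or_self_of_dvd _ hdvd) with h1 | h1
    · exact (CharP.char_is_prime F (ringChar F)).ne_one h1
    · exact hF2 h1)
  have hq2 : 2 ≤ Fintype.card F := Fintype.one_lt_card
  have him : i ≤ m := hrank ▸ Nat.sub_le _ _
  have hm1 : 1 ≤ m := le_trans hi1 him
  haveI : FiniteDimensional F V := FiniteDimensional.of_finrank_pos (by rw [hV]; omega)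
  letI : Fintype V := Module.fintypeOfFintype (Module.finBasis F V)
  subst hV
  set n := Module.finrank F V with hn
  obtain ⟨w, ⟨e⟩⟩ := QuadraticForm.equivalent_weightedSumSquares Q
  have hQ : ∀ x : V, Q x = ∑ j, w j * (e x j * e x j) := by
    intro x
    rw [← e.map_app x, QuadraticMap.weightedSumSquares_apply]
    exact Finset.sum_congr rfl fun j _ => by rw [smul_eq_mul]
  have hmem : ∀ x : V, x ∈ W ↔ ∀ j, w j * e x j = 0 := by
    intro x
    rw [hW x]
    rw [show (∀ y : V, Q (x + y) = Q x + Q y) ↔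
        (∀ v : Fin n → F, (∑ j, w j * ((e x j + v j) * (e x j + v j)))
          = (∑ j, w j * (e x j * e x j)) + ∑ j, w j * (v j * v j)) from ?_]
    · exact diag_radical h2F w (e x)
    constructor
    · intro h v
      have hy := h (e.toLinearEquiv.symm v)
      rw [hQ, hQ, hQ] at hy
      have he : ∀ j, e (x + e.toLinearEquiv.symm v) j = e x j + v j := by
        intro j
        have : e (x + e.toLinearEquiv.symm v) = e x + v := by
          rw [map_add]
          congr 1
          exact e.toLinearEquiv.apply_symm_apply v
        rw [this]; rfl
      have he2 : ∀ j, e (e.toLinearEquiv.symm v) j = v j := by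
        intro j
        have h5 : e (e.toLinearEquiv.symm v) = v := e.toLinearEquiv.apply_symm_apply v
        rw [h5]
      simp only [he, he2] at hy
      exact hy
    · intro h y
      rw [hQ, hQ, hQ]
      have hv := h (e y)
      have he : ∀ j, e (x + y) j = e x j + e y j := by
        intro j; rw [map_add]; rfl
      simp only [he]
      exact hv
  set z := (univ.filter fun j => w j = 0).card with hz
  have hiw : (univ.filter fun j => w j ≠ 0).card + z = n := by
    have h := Finset.card_filter_add_card_filter_not (s := (univ : Finset (Fin n)))
      (p := fun j => w j ≠ 0)
    simp only [not_not] at h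
    rw [card_univ, Fintype.card_fin] at h
    exact h
  have hcardW : Fintype.card W = Fintype.card F ^ z := by
    have e1 : W ≃ {u : Fin n → F // ∀ j, w j * u j = 0} :=
      e.toLinearEquiv.toEquiv.subtypeEquiv fun x => by simpa using hmem x
    have e2 : {u : Fin n → F // ∀ j, w j * u j = 0} ≃ ∀ j, {t : F // w j * t = 0} :=
      Equiv.subtypePiEquivPi (p := fun (j : Fin n) (t : F) => w j * t = 0)
    rw [Fintype.card_congr (e1.trans e2), Fintype.card_pi]
    have hfac : ∀ j, Fintype.card {t : F // w j * t = 0}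
        = if w j = 0 then Fintype.card F else 1 := by
      intro j
      by_cases hwj : w j = 0
      · rw [if_pos hwj]
        exact Fintype.card_congr (Equiv.subtypeUnivEquiv fun t => by rw [hwj, zero_mul])
      · rw [if_neg hwj, Fintype.card_eq_one_iff]
        refine ⟨⟨0, by rw [mul_zero]⟩, fun b => Subtype.ext ?_⟩
        exact (mul_eq_zero.mp b.2).resolve_left hwj
    rw [Finset.prod_congr rfl fun j _ => hfac j,
      ← Finset.prod_filter_mul_prod_filter_not univ (fun j => w j = 0),
      Finset.prod_congr rfl (fun j hj => if_pos (Finset.mem_filter.mp hj).2),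
      Finset.prod_congr rfl (fun j hj => if_neg (Finset.mem_filter.mp hj).2),
      Finset.prod_const, Finset.prod_const_one, mul_one, hz]
  have hpow2 : Fintype.card F ^ Module.finrank F W = Fintype.card F ^ z := by
    rw [← Module.card_eq_pow_finrank (K := F) (V := W), hcardW]
  have hfrW : Module.finrank F W = z := Nat.pow_right_injective hq2 hpow2
  have hzn : z ≤ n := by omega
  have hieq : (univ.filter fun j => w j ≠ 0).card = i := by omega
  have hzeros : (univ.filter fun x : V => Q x = 0).card = Fintype.card F ^ (n - 1) := by
    have hd := diag_count hF2 n w (by rw [hieq]; exact hiodd)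
    rw [← hd]
    apply Finset.card_bij (fun x _ => e x)
    · intro x hx
      rw [Finset.mem_filter] at hx ⊢
      exact ⟨Finset.mem_univ _, by rw [← hQ x]; exact hx.2⟩
    · intro a _ b _ hab
      exact e.toLinearEquiv.injective hab
    · intro y hy
      refine ⟨e.toLinearEquiv.symm y, ?_, e.toLinearEquiv.apply_symm_apply y⟩
      rw [Finset.mem_filter]
      refine ⟨Finset.mem_univ _, ?_⟩
      rw [hQ]
      have h5 : e (e.toLinearEquiv.symm y) = y := e.toLinearEquiv.apply_symm_apply y
      rw [h5]
      exact (Finset.mem_filter.mp hy).2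
  have htot : Fintype.card V = Fintype.card F ^ n := Module.card_eq_pow_finrank (K := F) (V := V)
  have hset : {x : V | x ≠ 0 ∧ Q x ≠ 0}.ncard = (univ.filter fun x : V => ¬ Q x = 0).card := by
    rw [Set.ncard_eq_toFinset_card']
    congr 1
    ext x
    simp only [Set.mem_toFinset, Set.mem_setOf_eq, Finset.mem_filter, Finset.mem_univ, true_and]
    constructor
    · exact fun h => h.2
    · intro h
      refine ⟨fun h0 => h ?_, h⟩
      rw [h0]
      exact map_zero Q
  have hcompl : (univ.filter fun x : V => ¬ Q x = 0).card
      = Fintype.card F ^ n - Fintype.card F ^ (n - 1) := by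
    have h := Finset.card_filter_add_card_filter_not (s := (univ : Finset V))
      (p := fun x => Q x = 0)
    rw [Finset.card_univ] at h
    omega
  rw [hset, hcompl, ← hq]
  have hpow : Fintype.card F ^ n = Fintype.card F ^ (n - 1) * Fintype.card F := by
    rw [← pow_succ]
    congr 1
    omega
  rw [hpow, Nat.mul_sub, mul_one]
end
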